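/- arXiv:1805.03259 — 12 statements merged into one kernel-verified Lean document; each statement's English description precedes it below -/
import Mathlib

section
/- For every odd positive integer k, the punctured interval T_k tiles ℤ^3. -/
/-- The punctured interval `T_k = {-k, …, -1, 1, …, k} ⊆ ℤ`. -/
def puncturedInterval (k : ℕ) : Set ℤ := {t : ℤ | t ≠ 0 ∧ -(k : ℤ) ≤ t ∧ t ≤ k}

/-- A copy of `T_k` in `ℤ^d`: a translate of `T_k` along a coordinate direction. -/
def IsCopy (k : ℕ) {d : ℕ} (C : Set (Fin d → ℤ)) : Prop :=
  ∃ (a : Fin d → ℤ) (i : Fin d),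
    C = (fun t : ℤ => a + t • Pi.single i (1 : ℤ)) '' puncturedInterval k

/-- `T_k` tiles `Y ⊆ ℤ^d`: `Y` is a disjoint union of copies of `T_k`. -/
def Tiles (k : ℕ) {d : ℕ} (Y : Set (Fin d → ℤ)) : Prop :=
  ∃ 𝒞 : Set (Set (Fin d → ℤ)),
    (∀ C ∈ 𝒞, IsCopy k C) ∧ 𝒞.PairwiseDisjoint id ∧ ⋃₀ 𝒞 = Y

namespace PunctureAux

/-- If `n ∣ x` and `-n < x < n` then `x = 0`. -/
lemma dvdZero {n x : ℤ} (h : n ∣ x) (h1 : -n < x) (h2 : x < n) : x = 0 := by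
  obtain ⟨c, rfl⟩ := h
  have hn : 0 < n := by linarith
  rcases lt_trichotomy c 0 with hc | rfl | hc
  · have : n * c ≤ n * (-1) := mul_le_mul_of_nonneg_left (by omega) hn.le
    linarith
  · exact mul_zero n
  · have : n * 1 ≤ n * c := mul_le_mul_of_nonneg_left (by omega) hn.le
    linarith

/-- If `n ∣ x` and `-n < x < 2n` then `x = 0` or `x = n`. -/
lemma dvdTwo {n x : ℤ} (h : n ∣ x) (h1 : -n < x) (h2 : x < 2 * n) : x = 0 ∨ x = n := by
  obtain ⟨c, rfl⟩ := h
  have hn : 0 < n := by linarith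
  rcases lt_trichotomy c 0 with hc | rfl | hc
  · have : n * c ≤ n * (-1) := mul_le_mul_of_nonneg_left (by omega) hn.le
    linarith
  · exact Or.inl (mul_zero n)
  · rcases lt_trichotomy c 1 with hc1 | rfl | hc1
    · omega
    · exact Or.inr (mul_one n)
    · have : n * 2 ≤ n * c := mul_le_mul_of_nonneg_left (by omega) hn.le
      linarith

/-- If `n ∣ x`, `0 < n` and `-2n < x < 2n` then `x ∈ {-n, 0, n}`. -/
lemma dvdThree {n x : ℤ} (hn : 0 < n) (h : n ∣ x) (h1 : -(2*n) < x) (h2 : x < 2 * n) :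
    x = -n ∨ x = 0 ∨ x = n := by
  obtain ⟨c, rfl⟩ := h
  rcases lt_trichotomy c 0 with hc | rfl | hc
  · rcases lt_trichotomy c (-1) with hc1 | rfl | hc1
    · have : n * c ≤ n * (-2) := mul_le_mul_of_nonneg_left (by omega) hn.le
      linarith
    · exact Or.inl (by ring)
    · omega
  · exact Or.inr (Or.inl (mul_zero n))
  · rcases lt_trichotomy c 1 with hc1 | rfl | hc1
    · omega
    · exact Or.inr (Or.inr (mul_one n))
    · have : n * 2 ≤ n * c := mul_le_mul_of_nonneg_left (by omega) hn.le
      linarith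

section cases

variable (K : ℤ)

/-- Case A–A. -/
lemma caseAA {t t' j j' e e' : ℤ}
    (ht1 : -K ≤ t) (ht2 : t ≤ K) (ht1' : -K ≤ t') (ht2' : t' ≤ K)
    (hj1 : 0 ≤ j) (hj2 : j ≤ K - 2) (hj1' : 0 ≤ j') (hj2' : j' ≤ K - 2)
    (he : e = 0 ∨ e = 1) (he' : e' = 0 ∨ e' = 1)
    (hdvd : 4*K*(K+1) ∣ (K*t + (K+1)*j + K + (2*K^2+3*K)*e)
        - (K*t' + (K+1)*j' + K + (2*K^2+3*K)*e')) :
    t = t' ∧ j = j' ∧ e = e' := by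
  have hK : 2 ≤ K := by linarith
  obtain ⟨c, hc⟩ := hdvd
  have h1 : j - j' = K * (4*(K+1)*c - ((t - t') + (j - j') + (2*K+3)*(e - e'))) := by
    linear_combination hc
  have hjj : j - j' = 0 := dvdZero ⟨_, h1⟩ (by linarith) (by linarith)
  rcases he with rfl | rfl <;> rcases he' with rfl | rfl
  · have h3 : K * (t - t') = K * (4*(K+1)*c) := by linear_combination hc - (K+1) * hjj
    have h2 : t - t' = 4*(K+1)*c := mul_left_cancel₀ (by linarith) h3
    have h4 : t - t' = 0 := dvdZero ⟨c, h2⟩ (by linarith) (by linarith)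
    exact ⟨by linarith, by linarith, rfl⟩
  · exfalso
    have h3 : K * (t - t' - (2*K+3)) = K * (4*(K+1)*c) := by
      linear_combination hc - (K+1) * hjj
    have h2 : t - t' - (2*K+3) = 4*(K+1)*c := mul_left_cancel₀ (by linarith) h3
    have h4 : t - t' - (2*K+3) = 0 := dvdZero ⟨c, h2⟩ (by linarith) (by linarith)
    linarith
  · exfalso
    have h3 : K * (t - t' + (2*K+3)) = K * (4*(K+1)*c) := by
      linear_combination hc - (K+1) * hjj
    have h2 : t - t' + (2*K+3) = 4*(K+1)*c := mul_left_cancel₀ (by linarith) h3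
    have h4 : t - t' + (2*K+3) = 0 := dvdZero ⟨c, h2⟩ (by linarith) (by linarith)
    linarith
  · have h3 : K * (t - t') = K * (4*(K+1)*c) := by linear_combination hc - (K+1) * hjj
    have h2 : t - t' = 4*(K+1)*c := mul_left_cancel₀ (by linarith) h3
    have h4 : t - t' = 0 := dvdZero ⟨c, h2⟩ (by linarith) (by linarith)
    exact ⟨by linarith, by linarith, rfl⟩

/-- Case B–B. -/
lemma caseBB {t t' e e' : ℤ} (hK : 1 ≤ K)
    (ht1 : -K ≤ t) (ht2 : t ≤ K) (ht1' : -K ≤ t') (ht2' : t' ≤ K)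
    (he : e = 0 ∨ e = 1) (he' : e' = 0 ∨ e' = 1)
    (hdvd : 4*K*(K+1) ∣ ((K+1)*t + K^2+K-1 + (K^2+2*K)*e)
        - ((K+1)*t' + K^2+K-1 + (K^2+2*K)*e')) :
    t = t' ∧ e = e' := by
  obtain ⟨c, hc⟩ := hdvd
  have h1 : e' - e = (K+1) * (4*K*c - ((t - t') + (K+1)*(e - e'))) := by
    linear_combination hc
  have hee : e' - e = 0 := by
    refine dvdZero ⟨_, h1⟩ ?_ ?_ <;> rcases he with rfl | rfl <;> rcases he' with rfl | rfl <;>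
      linarith
  have h3 : (K+1) * (t - t') = (K+1) * (4*K*c) := by
    linear_combination hc + (K^2+2*K) * hee
  have h2 : t - t' = 4*K*c := mul_left_cancel₀ (by linarith) h3
  have h4 : t - t' = 0 := dvdZero ⟨c, h2⟩ (by linarith) (by linarith)
  exact ⟨by linarith, by linarith⟩

/-- Case C–C (uses `K` odd). -/
lemma caseCC {l t t' e e' : ℤ} (hK : 1 ≤ K) (hodd : K = 2*l + 1)
    (ht1 : -K ≤ t) (ht2 : t ≤ K) (ht1' : -K ≤ t') (ht2' : t' ≤ K)
    (he : e = 0 ∨ e = 1) (he' : e' = 0 ∨ e' = 1)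
    (hdvd : 4*K*(K+1) ∣ (2*K*t + K^2+2*K-1 + (3*K^2+2*K)*e)
        - (2*K*t' + K^2+2*K-1 + (3*K^2+2*K)*e')) :
    t = t' ∧ e = e' := by
  obtain ⟨c, hc⟩ := hdvd
  rcases he with rfl | rfl <;> rcases he' with rfl | rfl
  · have h3 : (2*K) * (t - t') = (2*K) * (2*(K+1)*c) := by linear_combination hc
    have h2 : t - t' = 2*(K+1)*c := mul_left_cancel₀ (by linarith) h3
    have h4 : t - t' = 0 := dvdZero ⟨c, h2⟩ (by linarith) (by linarith)
    exact ⟨by linarith, rfl⟩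
  · exfalso
    have h3 : K * (2*(t - t') - (3*K+2)) = K * (4*(K+1)*c) := by linear_combination hc
    have h2 : 2*(t - t') - (3*K+2) = 4*(K+1)*c := mul_left_cancel₀ (by linarith) h3
    have h4 : (2:ℤ) ∣ (2*(t - t') - (3*K+2)) := ⟨2*(K+1)*c, by linear_combination h2⟩
    obtain ⟨d, hd⟩ := h4
    omega
  · exfalso
    have h3 : K * (2*(t - t') + (3*K+2)) = K * (4*(K+1)*c) := by linear_combination hc
    have h2 : 2*(t - t') + (3*K+2) = 4*(K+1)*c := mul_left_cancel₀ (by linarith) h3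
    have h4 : (2:ℤ) ∣ (2*(t - t') + (3*K+2)) := ⟨2*(K+1)*c, by linear_combination h2⟩
    obtain ⟨d, hd⟩ := h4
    omega
  · have h3 : (2*K) * (t - t') = (2*K) * (2*(K+1)*c) := by linear_combination hc
    have h2 : t - t' = 2*(K+1)*c := mul_left_cancel₀ (by linarith) h3
    have h4 : t - t' = 0 := dvdZero ⟨c, h2⟩ (by linarith) (by linarith)
    exact ⟨by linarith, rfl⟩

end cases

section cases2
variable (K : ℤ)

/-- Case A–C : impossible. -/
lemma caseAC {t t' j e e' : ℤ}
    (hj1 : 0 ≤ j) (hj2 : j ≤ K - 2)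
    (hdvd : 4*K*(K+1) ∣ (K*t + (K+1)*j + K + (2*K^2+3*K)*e)
        - (2*K*t' + K^2+2*K-1 + (3*K^2+2*K)*e')) : False := by
  have hK : 2 ≤ K := by linarith
  obtain ⟨c, hc⟩ := hdvd
  have h1 : j + 1 = K * (4*(K+1)*c - (t + j + 1 + (2*K+3)*e - 2*t' - (K+2) - (3*K+2)*e')) := by
    linear_combination hc
  have h2 : j + 1 = 0 := dvdZero ⟨_, h1⟩ (by linarith) (by linarith)
  linarith


/-- Helper: `cc·K(K+1) = 4c·K(K+1)` with `4 ∤ cc` is impossible. -/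
lemma notdvd (c cc : ℤ) (hK : 1 ≤ K) (hcc : ¬ (4 ∣ cc))
    (h5 : cc * (K*(K+1)) = (4*c) * (K*(K+1))) : False := by
  have h6 : cc = 4*c := mul_right_cancel₀ (show (K*(K+1)) ≠ 0 by nlinarith) h5
  exact hcc ⟨c, h6⟩

/-- Case A–B : impossible. -/
lemma caseAB {t t' j e e' : ℤ} (hK1 : 1 ≤ K)
    (ht0 : t ≠ 0) (ht1 : -K ≤ t) (ht2 : t ≤ K) (ht1' : -K ≤ t') (ht2' : t' ≤ K)
    (hj1 : 0 ≤ j) (hj2 : j ≤ K - 2)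
    (he : e = 0 ∨ e = 1) (he' : e' = 0 ∨ e' = 1)
    (hdvd : 4*K*(K+1) ∣ (K*t + (K+1)*j + K + (2*K^2+3*K)*e)
        - ((K+1)*t' + K^2+K-1 + (K^2+2*K)*e')) : False := by
  have hK : 2 ≤ K := by linarith
  obtain ⟨c, hc⟩ := hdvd
  have h1 : j - t' + 1
      = K * (4*(K+1)*c - (t + j + 1 + (2*K+3)*e - t' - (K+1) - (K+2)*e')) := by
    linear_combination hc
  have htp0 : j - t' + 1 = 0 ∨ j - t' + 1 = K := dvdTwo ⟨_, h1⟩ (by linarith) (by linarith)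
  have htp : t' = j + 1 ∨ t' = j + 1 - K := by omega
  have h2 : e' - e - t
      = (K+1) * (4*K*c - (t + j + 1 + (2*K+1)*e - t' - K - (K+1)*e')) := by
    linear_combination hc
  have h3 : e' - e - t = -(K+1) ∨ e' - e - t = 0 ∨ e' - e - t = K+1 := by
    refine dvdThree (by linarith) ⟨_, h2⟩ ?_ ?_ <;>
      rcases he with rfl | rfl <;> rcases he' with rfl | rfl <;> linarith
  rcases he with rfl | rfl <;> rcases he' with rfl | rfl
  · omega
  · -- e = 0, e' = 1 : t = 1 or t = -K
    have ht : t = 1 ∨ t = -K := by omega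
    rcases ht with ht | ht <;> rcases htp with htp | htp
    · exact notdvd K c (-2) hK1 (by decide)
        (by linear_combination hc - K * ht + (K+1) * htp)
    · exact notdvd K c (-1) hK1 (by decide)
        (by linear_combination hc - K * ht + (K+1) * htp)
    · exact notdvd K c (-3) hK1 (by decide)
        (by linear_combination hc - K * ht + (K+1) * htp)
    · exact notdvd K c (-2) hK1 (by decide)
        (by linear_combination hc - K * ht + (K+1) * htp)
  · -- e = 1, e' = 0 : t = -1 or t = K
    have ht : t = -1 ∨ t = K := by omega
    rcases ht with ht | ht <;> rcases htp with htp | htp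
    · exact notdvd K c (1) hK1 (by decide)
        (by linear_combination hc - K * ht + (K+1) * htp)
    · exact notdvd K c (2) hK1 (by decide)
        (by linear_combination hc - K * ht + (K+1) * htp)
    · exact notdvd K c (2) hK1 (by decide)
        (by linear_combination hc - K * ht + (K+1) * htp)
    · exact notdvd K c (3) hK1 (by decide)
        (by linear_combination hc - K * ht + (K+1) * htp)
  · omega

/-- Case B–C : impossible (uses `K` odd). -/
lemma caseBC {l t t' e e' : ℤ} (hK1 : 1 ≤ K) (hodd : K = 2*l + 1)
    (ht0 : t ≠ 0) (ht1 : -K ≤ t) (ht2 : t ≤ K)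
    (ht0' : t' ≠ 0) (ht1' : -K ≤ t') (ht2' : t' ≤ K)
    (he : e = 0 ∨ e = 1) (he' : e' = 0 ∨ e' = 1)
    (hdvd : 4*K*(K+1) ∣ ((K+1)*t + K^2+K-1 + (K^2+2*K)*e)
        - (2*K*t' + K^2+2*K-1 + (3*K^2+2*K)*e')) : False := by
  obtain ⟨c, hc⟩ := hdvd
  have h1 : t = K * (4*(K+1)*c - (t - 2*t' - 1 + (K+2)*e - (3*K+2)*e')) := by
    linear_combination hc
  have ht : t = -K ∨ t = K := by
    have := dvdThree (show (0:ℤ) < K by linarith) ⟨_, h1⟩ (by linarith) (by linarith)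
    omega
  have h2 : 2*t' + 1 - e - e'
      = (K+1) * (4*K*c - (t - 2*t' - 1 + (K+1)*e - (3*K-1)*e')) := by
    linear_combination hc
  rcases he with rfl | rfl <;> rcases he' with rfl | rfl
  · have h4 : (2:ℤ) ∣ (2*t' + 1 - 0 - 0) :=
      ⟨(l+1) * (4*K*c - (t - 2*t' - 1 + (K+1)*0 - (3*K-1)*0)),
        by linear_combination h2 + (4*K*c - (t - 2*t' - 1)) * hodd⟩
    obtain ⟨d, hd⟩ := h4
    omega
  · have h5 : 2*t' = -(K+1) ∨ 2*t' = K+1 := by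
      have := dvdThree (show (0:ℤ) < K+1 by linarith) ⟨_, h2⟩ (by linarith) (by linarith)
      omega
    rcases ht with ht | ht <;> rcases h5 with h5 | h5
    · exact notdvd K c (-3) hK1 (by decide)
        (by linear_combination hc - (K+1) * ht + K * h5)
    · exact notdvd K c (-5) hK1 (by decide)
        (by linear_combination hc - (K+1) * ht + K * h5)
    · exact notdvd K c (-1) hK1 (by decide)
        (by linear_combination hc - (K+1) * ht + K * h5)
    · exact notdvd K c (-3) hK1 (by decide)
        (by linear_combination hc - (K+1) * ht + K * h5)
  · have h5 : 2*t' = -(K+1) ∨ 2*t' = K+1 := by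
      have := dvdThree (show (0:ℤ) < K+1 by linarith) ⟨_, h2⟩ (by linarith) (by linarith)
      omega
    rcases ht with ht | ht <;> rcases h5 with h5 | h5
    · exact notdvd K c (1) hK1 (by decide)
        (by linear_combination hc - (K+1) * ht + K * h5)
    · exact notdvd K c (-1) hK1 (by decide)
        (by linear_combination hc - (K+1) * ht + K * h5)
    · exact notdvd K c (3) hK1 (by decide)
        (by linear_combination hc - (K+1) * ht + K * h5)
    · exact notdvd K c (1) hK1 (by decide)
        (by linear_combination hc - (K+1) * ht + K * h5)
  · have h4 : (2:ℤ) ∣ (2*t' + 1 - 1 - 1) :=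
      ⟨(l+1) * (4*K*c - (t - 2*t' - 1 + (K+1)*1 - (3*K-1)*1)),
        by linear_combination h2 + (4*K*c - (t - 2*t' - 1 + (K+1)*1 - (3*K-1)*1)) * hodd⟩
    obtain ⟨d, hd⟩ := h4
    omega

end cases2
variable (k : ℕ)

/-- Index of the `2k` values `t ∈ {-k,…,-1,1,…,k}`. -/
def tval (s : Fin (2*k)) : ℤ := if (s : ℕ) < k then (s : ℤ) - k else (s : ℤ) - k + 1

lemma tval_ne (s : Fin (2*k)) : tval k s ≠ 0 := by
  have := s.isLt
  unfold tval; split <;> omega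

lemma tval_lb (s : Fin (2*k)) : -(k:ℤ) ≤ tval k s := by
  have := s.isLt
  unfold tval; split <;> omega

lemma tval_ub (s : Fin (2*k)) : tval k s ≤ (k:ℤ) := by
  have := s.isLt
  unfold tval; split <;> omega

lemma tval_inj {s s' : Fin (2*k)} (h : tval k s = tval k s') : s = s' := by
  have h1 := s.isLt
  have h2 := s'.isLt
  unfold tval at h
  apply Fin.ext
  split at h <;> split at h <;> omega

lemma tval_surj {t : ℤ} (ht : t ≠ 0) (h1 : -(k:ℤ) ≤ t) (h2 : t ≤ (k:ℤ)) :
    ∃ s : Fin (2*k), tval k s = t := by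
  by_cases h0 : t < 0
  · refine ⟨⟨(t + k).toNat, by omega⟩, ?_⟩
    unfold tval
    simp only [Fin.val_mk]
    split <;> omega
  · refine ⟨⟨(t + k - 1).toNat, by omega⟩, ?_⟩
    unfold tval
    simp only [Fin.val_mk]
    split <;> omega

/-- The index type for the tiles: family A (direction 0), B (direction 1), C (direction 2). -/
abbrev W := (Bool × Fin (k-1) × Fin (2*k)) ⊕ (Bool × Fin (2*k)) ⊕ (Bool × Fin (2*k))

def dirW : W k → Fin 3
  | .inl _ => 0
  | .inr (.inl _) => 1
  | .inr (.inr _) => 2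

def tcomp : W k → Fin (2*k)
  | .inl (_, _, s) => s
  | .inr (.inl (_, s)) => s
  | .inr (.inr (_, s)) => s

def replT : W k → Fin (2*k) → W k
  | .inl (e, j, _), s => .inl (e, j, s)
  | .inr (.inl (e, _)), s => .inr (.inl (e, s))
  | .inr (.inr (e, _)), s => .inr (.inr (e, s))

def shiftZ : W k → ℤ
  | .inl (e, j, _) => ((k:ℤ)+1) * (j : ℤ) + (k:ℤ) + (2*(k:ℤ)^2+3*(k:ℤ)) * (bif e then 1 else 0)
  | .inr (.inl (e, _)) => (k:ℤ)^2+(k:ℤ)-1 + ((k:ℤ)^2+2*(k:ℤ)) * (bif e then 1 else 0)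
  | .inr (.inr (e, _)) => (k:ℤ)^2+2*(k:ℤ)-1 + (3*(k:ℤ)^2+2*(k:ℤ)) * (bif e then 1 else 0)

def coefs : Fin 3 → ℤ := ![(k:ℤ), (k:ℤ)+1, 2*(k:ℤ)]

def encZ (w : W k) : ℤ := shiftZ k w + coefs k (dirW k w) * tval k (tcomp k w)

lemma dirW_replT (w : W k) (s : Fin (2*k)) : dirW k (replT k w s) = dirW k w := by
  rcases w with ⟨e, j, s0⟩ | (⟨e, s0⟩ | ⟨e, s0⟩) <;> rfl

lemma tcomp_replT (w : W k) (s : Fin (2*k)) : tcomp k (replT k w s) = s := by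
  rcases w with ⟨e, j, s0⟩ | (⟨e, s0⟩ | ⟨e, s0⟩) <;> rfl

lemma shiftZ_replT (w : W k) (s : Fin (2*k)) : shiftZ k (replT k w s) = shiftZ k w := by
  rcases w with ⟨e, j, s0⟩ | (⟨e, s0⟩ | ⟨e, s0⟩) <;> rfl

lemma encZ_A (e : Bool) (j : Fin (k-1)) (s : Fin (2*k)) :
    encZ k (.inl (e, j, s)) = (k:ℤ) * tval k s + ((k:ℤ)+1) * (j : ℤ) + (k:ℤ)
      + (2*(k:ℤ)^2+3*(k:ℤ)) * (bif e then 1 else 0) := by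
  simp only [encZ, shiftZ, dirW, tcomp, coefs]
  simp only [Matrix.cons_val_zero]
  ring

lemma encZ_B (e : Bool) (s : Fin (2*k)) :
    encZ k (.inr (.inl (e, s))) = ((k:ℤ)+1) * tval k s + (k:ℤ)^2+(k:ℤ)-1
      + ((k:ℤ)^2+2*(k:ℤ)) * (bif e then 1 else 0) := by
  simp only [encZ, shiftZ, dirW, tcomp, coefs]
  simp only [Matrix.cons_val_one, Matrix.head_cons, Matrix.cons_val_zero]
  ring

lemma encZ_C (e : Bool) (s : Fin (2*k)) :
    encZ k (.inr (.inr (e, s))) = 2*(k:ℤ) * tval k s + (k:ℤ)^2+2*(k:ℤ)-1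
      + (3*(k:ℤ)^2+2*(k:ℤ)) * (bif e then 1 else 0) := by
  simp only [encZ, shiftZ, dirW, tcomp, coefs]
  simp only [Matrix.cons_val_two, Matrix.tail_cons, Matrix.head_cons]
  ring

lemma bif_id (e : Bool) : (bif e then (1:ℤ) else 0) = 0 ∨ (bif e then (1:ℤ) else 0) = 1 := by
  cases e <;> simp

lemma bif_inj {e e' : Bool} (h : (bif e then (1:ℤ) else 0) = (bif e' then (1:ℤ) else 0)) :
    e = e' := by
  cases e <;> cases e' <;> simp_all


lemma castK {k l : ℕ} (hk : 0 < k) (hodd : k = 2*l + 1) :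
    1 ≤ (k:ℤ) ∧ (k:ℤ) = 2*(l:ℤ) + 1 := by omega

lemma encZ_inj (l : ℕ) (hk : 0 < k) (hodd : k = 2*l + 1) {w w' : W k}
    (hdvd : (4*(k:ℤ)*((k:ℤ)+1)) ∣ (encZ k w - encZ k w')) : w = w' := by
  obtain ⟨hK1, hoddZ⟩ := castK hk hodd
  rcases w with ⟨e, j, s⟩ | (⟨e, s⟩ | ⟨e, s⟩) <;>
    rcases w' with ⟨e', j', s'⟩ | (⟨e', s'⟩ | ⟨e', s'⟩)
  · -- A A
    rw [encZ_A, encZ_A] at hdvd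
    have hj : (0:ℤ) ≤ (j:ℤ) ∧ ((j:ℕ):ℤ) ≤ (k:ℤ) - 2 := by have := j.isLt; omega
    have hj' : (0:ℤ) ≤ (j':ℤ) ∧ ((j':ℕ):ℤ) ≤ (k:ℤ) - 2 := by have := j'.isLt; omega
    obtain ⟨h1, h2, h3⟩ := caseAA (k:ℤ) (tval_lb k s) (tval_ub k s) (tval_lb k s')
      (tval_ub k s') hj.1 hj.2 hj'.1 hj'.2 (bif_id e) (bif_id e') hdvd
    obtain rfl : e = e' := bif_inj h3
    obtain rfl : j = j' := by apply Fin.ext; omega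
    obtain rfl : s = s' := tval_inj k h1
    rfl
  · -- A B
    exfalso
    rw [encZ_A, encZ_B] at hdvd
    have hj : (0:ℤ) ≤ (j:ℤ) ∧ ((j:ℕ):ℤ) ≤ (k:ℤ) - 2 := by have := j.isLt; omega
    exact caseAB (k:ℤ) hK1 (tval_ne k s) (tval_lb k s) (tval_ub k s) (tval_lb k s')
      (tval_ub k s') hj.1 hj.2 (bif_id e) (bif_id e') hdvd
  · -- A C
    exfalso
    rw [encZ_A, encZ_C] at hdvd
    have hj : (0:ℤ) ≤ (j:ℤ) ∧ ((j:ℕ):ℤ) ≤ (k:ℤ) - 2 := by have := j.isLt; omega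
    exact caseAC (k:ℤ) hj.1 hj.2 hdvd
  · -- B A
    exfalso
    rw [encZ_B, encZ_A] at hdvd
    have hdvd' := dvd_neg.mpr hdvd
    rw [neg_sub] at hdvd'
    have hj' : (0:ℤ) ≤ (j':ℤ) ∧ ((j':ℕ):ℤ) ≤ (k:ℤ) - 2 := by have := j'.isLt; omega
    exact caseAB (k:ℤ) hK1 (tval_ne k s') (tval_lb k s') (tval_ub k s') (tval_lb k s)
      (tval_ub k s) hj'.1 hj'.2 (bif_id e') (bif_id e) hdvd'
  · -- B B
    rw [encZ_B, encZ_B] at hdvd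
    obtain ⟨h1, h2⟩ := caseBB (k:ℤ) hK1 (tval_lb k s) (tval_ub k s) (tval_lb k s')
      (tval_ub k s') (bif_id e) (bif_id e') hdvd
    obtain rfl : e = e' := bif_inj h2
    obtain rfl : s = s' := tval_inj k h1
    rfl
  · -- B C
    exfalso
    rw [encZ_B, encZ_C] at hdvd
    exact caseBC (k:ℤ) hK1 hoddZ (tval_ne k s) (tval_lb k s) (tval_ub k s)
      (tval_ne k s') (tval_lb k s') (tval_ub k s') (bif_id e) (bif_id e') hdvd
  · -- C A
    exfalso
    rw [encZ_C, encZ_A] at hdvd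
    have hdvd' := dvd_neg.mpr hdvd
    rw [neg_sub] at hdvd'
    have hj' : (0:ℤ) ≤ (j':ℤ) ∧ ((j':ℕ):ℤ) ≤ (k:ℤ) - 2 := by have := j'.isLt; omega
    exact caseAC (k:ℤ) hj'.1 hj'.2 hdvd'
  · -- C B
    exfalso
    rw [encZ_C, encZ_B] at hdvd
    have hdvd' := dvd_neg.mpr hdvd
    rw [neg_sub] at hdvd'
    exact caseBC (k:ℤ) hK1 hoddZ (tval_ne k s') (tval_lb k s') (tval_ub k s')
      (tval_ne k s) (tval_lb k s) (tval_ub k s) (bif_id e') (bif_id e) hdvd'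
  · -- C C
    rw [encZ_C, encZ_C] at hdvd
    obtain ⟨h1, h2⟩ := caseCC (k:ℤ) hK1 hoddZ (tval_lb k s) (tval_ub k s) (tval_lb k s')
      (tval_ub k s') (bif_id e) (bif_id e') hdvd
    obtain rfl : e = e' := bif_inj h2
    obtain rfl : s = s' := tval_inj k h1
    rfl

lemma cardW (hk : 0 < k) : Fintype.card (W k) = 4*k*(k+1) := by
  obtain ⟨j, rfl⟩ := Nat.exists_eq_succ_of_ne_zero hk.ne'
  simp only [W, Fintype.card_sum, Fintype.card_prod, Fintype.card_bool, Fintype.card_fin,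
    Nat.succ_sub_one, Nat.succ_eq_add_one]
  ring

lemma enc_bij (l : ℕ) (hk : 0 < k) (hodd : k = 2*l + 1) :
    Function.Bijective (fun w : W k => ((encZ k w : ℤ) : ZMod (4*k*(k+1)))) := by
  haveI : NeZero (4*k*(k+1)) := ⟨by have := hk; positivity⟩
  rw [Fintype.bijective_iff_injective_and_card]
  constructor
  · intro w w' h
    simp only at h
    rw [ZMod.intCast_eq_intCast_iff] at h
    have hdvd : ((4*k*(k+1) : ℕ) : ℤ) ∣ encZ k w' - encZ k w := h.dvd
    have hm : ((4*k*(k+1) : ℕ) : ℤ) = 4*(k:ℤ)*((k:ℤ)+1) := by push_cast; ring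
    rw [hm] at hdvd
    exact (encZ_inj k l hk hodd hdvd).symm
  · rw [cardW k hk, ZMod.card]

end PunctureAux

namespace PunctureAux

/-- The linear functional used to position the copies. -/
def phi (k : ℕ) (p : Fin 3 → ℤ) : ℤ := (k:ℤ) * p 0 + ((k:ℤ)+1) * p 1 + 2*(k:ℤ) * p 2

lemma phi_apply (k : ℕ) (a : Fin 3 → ℤ) (t : ℤ) (i : Fin 3) :
    phi k (a + t • Pi.single i 1) = phi k a + coefs k i * t := by
  fin_cases i <;>
  · simp only [phi, coefs, Pi.add_apply, Pi.smul_apply, smul_eq_mul, Pi.single_apply]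
    norm_num [Fin.ext_iff]
    ring

end PunctureAux


open PunctureAux in
/-- For every odd positive integer `k`, the punctured interval `T_k` tiles `ℤ^3`. -/
theorem puncturedInterval_tiles_Z3_of_odd (k : ℕ) (hk : 0 < k) (hodd : Odd k) :
    Tiles k (Set.univ : Set (Fin 3 → ℤ)) := by
  obtain ⟨l, hl⟩ := hodd
  haveI : NeZero (4*k*(k+1)) := ⟨by have := hk; positivity⟩
  have hbij := enc_bij k l hk (by omega)
  have hm : ((4*k*(k+1) : ℕ) : ℤ) = 4*(k:ℤ)*((k:ℤ)+1) := by push_cast; ring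
  refine ⟨{ S | ∃ (c : Fin 3 → ℤ) (w : W k),
      S = (fun t : ℤ => c + t • Pi.single (dirW k w) (1 : ℤ)) '' puncturedInterval k
      ∧ (4*(k:ℤ)*((k:ℤ)+1)) ∣ (phi k c - shiftZ k w) }, ?_, ?_, ?_⟩
  · rintro C ⟨c, w, rfl, -⟩
    exact ⟨c, _, rfl⟩
  · -- pairwise disjoint
    rintro S₁ ⟨c₁, w₁, rfl, hd₁⟩ S₂ ⟨c₂, w₂, rfl, hd₂⟩ hne
    simp only [Function.onFun, id_eq]
    rw [Set.disjoint_left]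
    intro p hp₁ hp₂
    apply hne
    obtain ⟨t₁, ht₁, hpe₁⟩ := hp₁
    obtain ⟨t₂, ht₂, hpe₂⟩ := hp₂
    obtain ⟨ht₁0, ht₁1, ht₁2⟩ := ht₁
    obtain ⟨ht₂0, ht₂1, ht₂2⟩ := ht₂
    obtain ⟨s₁, hs₁⟩ := tval_surj k ht₁0 ht₁1 ht₁2
    obtain ⟨s₂, hs₂⟩ := tval_surj k ht₂0 ht₂1 ht₂2
    have hphi₁ : phi k p = phi k c₁ + coefs k (dirW k w₁) * t₁ := by
      rw [← hpe₁, phi_apply]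
    have hphi₂ : phi k p = phi k c₂ + coefs k (dirW k w₂) * t₂ := by
      rw [← hpe₂, phi_apply]
    have key₁ : (4*(k:ℤ)*((k:ℤ)+1)) ∣ (phi k p - encZ k (replT k w₁ s₁)) := by
      have heq : phi k p - encZ k (replT k w₁ s₁) = phi k c₁ - shiftZ k w₁ := by
        simp only [encZ, dirW_replT, tcomp_replT, shiftZ_replT, hs₁, hphi₁]
        ring
      rw [heq]; exact hd₁
    have key₂ : (4*(k:ℤ)*((k:ℤ)+1)) ∣ (phi k p - encZ k (replT k w₂ s₂)) := by
      have heq : phi k p - encZ k (replT k w₂ s₂) = phi k c₂ - shiftZ k w₂ := by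
        simp only [encZ, dirW_replT, tcomp_replT, shiftZ_replT, hs₂, hphi₂]
        ring
      rw [heq]; exact hd₂
    have hw : replT k w₁ s₁ = replT k w₂ s₂ := by
      apply hbij.1
      simp only
      rw [ZMod.intCast_eq_intCast_iff]
      have h₁ : encZ k (replT k w₁ s₁) ≡ phi k p [ZMOD ((4*k*(k+1) : ℕ) : ℤ)] := by
        rw [Int.modEq_iff_dvd, hm]
        exact key₁
      have h₂ : encZ k (replT k w₂ s₂) ≡ phi k p [ZMOD ((4*k*(k+1) : ℕ) : ℤ)] := by
        rw [Int.modEq_iff_dvd, hm]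
        exact key₂
      exact (h₁.trans h₂.symm : _)
    have hdir : dirW k w₁ = dirW k w₂ := by
      rw [← dirW_replT k w₁ s₁, ← dirW_replT k w₂ s₂, hw]
    have ht : t₁ = t₂ := by
      rw [← hs₁, ← hs₂, ← tcomp_replT k w₁ s₁, ← tcomp_replT k w₂ s₂, hw]
    have hc : c₁ = c₂ := by
      have := hpe₁.trans hpe₂.symm
      rw [hdir, ht] at this
      exact add_right_cancel this
    rw [hc, hdir]
  · -- union is univ
    apply Set.eq_univ_of_forall
    intro p
    obtain ⟨w, hw⟩ := hbij.2 ((phi k p : ℤ) : ZMod (4*k*(k+1)))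
    simp only at hw
    rw [ZMod.intCast_eq_intCast_iff] at hw
    have hdvd : (4*(k:ℤ)*((k:ℤ)+1)) ∣ (phi k p - encZ k w) := by
      rw [← hm]
      exact hw.dvd
    set i := dirW k w with hi
    set t := tval k (tcomp k w) with htdef
    refine ⟨(fun t' : ℤ => (p - t • Pi.single i 1) + t' • Pi.single i (1:ℤ)) ''
        puncturedInterval k, ⟨p - t • Pi.single i 1, w, rfl, ?_⟩, ?_⟩
    · have hceq : phi k (p - t • Pi.single i 1) = phi k p - coefs k i * t := by
        rw [sub_eq_add_neg, ← neg_smul, phi_apply]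
        ring
      have heq : phi k (p - t • Pi.single i 1) - shiftZ k w = phi k p - encZ k w := by
        rw [hceq]
        simp only [encZ]
        ring
      rw [heq]; exact hdvd
    · refine ⟨t, ⟨tval_ne k _, tval_lb k _, tval_ub k _⟩, ?_⟩
      simp
end

section
/- Let k ≥ 3, let d ≥ 1 and let S ⊆ ℤ^d with |S| = 3. Then there exists a set Y ⊆ S × ℤ ⊆ ℤ^{d+1} such that Y is a disjoint union of copies of T_k each lying in the last coordinate direction (i.e. each copy has the form {(s, m+t) : t ∈ T_k} for some s ∈ S and m ∈ ℤ), and for every n ∈ ℤ the intersection Y ∩ (S × {n}) has exactly 2 elements. -/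
private def pcopy {d : ℕ} (k : ℕ) (s : Fin d → ℤ) (m : ℤ) : Set ((Fin d → ℤ) × ℤ) :=
  (fun t : ℤ => (s, m + t)) '' puncturedInterval k

private lemma mem_pcopy {d : ℕ} (k : ℕ) (s x : Fin d → ℤ) (m n : ℤ) :
    (x, n) ∈ pcopy k s m ↔ x = s ∧ ∃ t : ℤ, (t ≠ 0 ∧ -(k:ℤ) ≤ t ∧ t ≤ (k:ℤ)) ∧ n = m + t := by
  simp only [pcopy, Set.mem_image, puncturedInterval, Set.mem_setOf_eq, Prod.mk.injEq]
  constructor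
  · rintro ⟨t, ht, hs, hn⟩
    exact ⟨hs.symm, t, ht, hn.symm⟩
  · rintro ⟨rfl, t, ht, rfl⟩
    exact ⟨t, ht, rfl, rfl⟩

private lemma pcopy_disj_ne {d : ℕ} (k : ℕ) (s s' : Fin d → ℤ) (m m' : ℤ) (h : s ≠ s') :
    Disjoint (pcopy k s m) (pcopy k s' m') := by
  rw [Set.disjoint_left]
  rintro ⟨x, n⟩ h1 h2
  rw [mem_pcopy] at h1 h2
  exact h (h1.1 ▸ h2.1)

private lemma pcopy_disj_far {d : ℕ} (k : ℕ) (s : Fin d → ℤ) (m m' : ℤ)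
    (h : m + 2*(k:ℤ) < m' ∨ m' + 2*(k:ℤ) < m) :
    Disjoint (pcopy k s m) (pcopy k s m') := by
  rw [Set.disjoint_left]
  rintro ⟨x, n⟩ h1 h2
  rw [mem_pcopy] at h1 h2
  obtain ⟨-, t, ⟨-, ht1, ht2⟩, rfl⟩ := h1
  obtain ⟨-, t', ⟨-, ht1', ht2'⟩, he⟩ := h2
  omega

private lemma far_of_ne (K o j j' : ℤ) (hK : 1 ≤ K) (h : j ≠ j') :
    (o + 3*K*j) + 2*K < o + 3*K*j' ∨ (o + 3*K*j') + 2*K < o + 3*K*j := by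
  rcases h.lt_or_gt with hlt | hlt
  · left
    have h3 : 3*K*(j+1) ≤ 3*K*j' := mul_le_mul_of_nonneg_left (by omega) (by linarith)
    nlinarith
  · right
    have h3 : 3*K*(j'+1) ≤ 3*K*j := mul_le_mul_of_nonneg_left (by omega) (by linarith)
    nlinarith

private lemma aux_col (K o n j0 r : ℤ) (hK : 1 ≤ K) (hn : n - o = 3*K*j0 + r)
    (h0 : 0 ≤ r) (h1 : r < 3*K) :
    (∃ j t : ℤ, (t ≠ 0 ∧ -K ≤ t ∧ t ≤ K) ∧ n = o + 3*K*j + t) ↔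
      ((1 ≤ r ∧ r ≤ K) ∨ 2*K ≤ r) := by
  constructor
  · rintro ⟨j, t, ⟨ht0, ht1, ht2⟩, hnt⟩
    have heq : 3*K*(j - j0) = r - t := by linear_combination hn - hnt
    have hD0 : 0 ≤ j - j0 := by
      by_contra hcon
      push_neg at hcon
      have h2 : j - j0 ≤ -1 := by omega
      have h3 : 3*K*(j - j0) ≤ 3*K*(-1) := mul_le_mul_of_nonneg_left h2 (by linarith)
      nlinarith
    have hD1 : j - j0 ≤ 1 := by
      by_contra hcon
      push_neg at hcon
      have h2 : (2:ℤ) ≤ j - j0 := by omega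
      have h3 : 3*K*2 ≤ 3*K*(j - j0) := mul_le_mul_of_nonneg_left h2 (by linarith)
      nlinarith
    have hcase : j - j0 = 0 ∨ j - j0 = 1 := by omega
    rcases hcase with h | h <;> rw [h] at heq <;> norm_num at heq
    · left; omega
    · right; omega
  · rintro (⟨hr1, hr2⟩ | hr)
    · exact ⟨j0, r, ⟨by omega, by omega, by omega⟩, by linear_combination hn⟩
    · exact ⟨j0 + 1, r - 3*K, ⟨by omega, by omega, by omega⟩, by linear_combination hn⟩

/-- Lemma 3 of the paper: given `S ⊆ ℤ^d` with `|S| = 3`, there is a set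
`Y ⊆ S × ℤ` which is a disjoint union of copies of `T_k` in the last coordinate
direction and meets each slice `S × {n}` in exactly 2 points. -/
theorem exists_Y_two_per_level (k : ℕ) (hk : 3 ≤ k) (d : ℕ) (hd : 1 ≤ d)
    (S : Set (Fin d → ℤ)) (hS : S.ncard = 3) :
    ∃ Y : Set ((Fin d → ℤ) × ℤ),
      Y ⊆ S ×ˢ (Set.univ : Set ℤ) ∧
      (∃ 𝒞 : Set (Set ((Fin d → ℤ) × ℤ)),
        (∀ C ∈ 𝒞, ∃ s ∈ S, ∃ m : ℤ,
          C = (fun t : ℤ => (s, m + t)) '' puncturedInterval k) ∧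
        𝒞.PairwiseDisjoint id ∧ ⋃₀ 𝒞 = Y) ∧
      ∀ n : ℤ, (Y ∩ S ×ˢ ({n} : Set ℤ)).ncard = 2 := by
  obtain ⟨a, b, c, hab, hac, hbc, rfl⟩ := Set.ncard_eq_three.mp hS
  have hk3 : (3:ℤ) ≤ (k:ℤ) := by exact_mod_cast hk
  have hK1 : (1:ℤ) ≤ (k:ℤ) := by linarith
  set 𝒞 : Set (Set ((Fin d → ℤ) × ℤ)) :=
    {C | ∃ j : ℤ, C = pcopy k a ((k:ℤ) + 3*(k:ℤ)*j) ∨ C = pcopy k b (2*(k:ℤ) + 3*(k:ℤ)*j) ∨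
        C = pcopy k c (0 + 3*(k:ℤ)*j)} with h𝒞
  have hY : ∀ (x : Fin d → ℤ) (n : ℤ), (x, n) ∈ ⋃₀ 𝒞 ↔
      ((x = a ∧ ∃ j t : ℤ, (t ≠ 0 ∧ -(k:ℤ) ≤ t ∧ t ≤ (k:ℤ)) ∧ n = (k:ℤ) + 3*(k:ℤ)*j + t) ∨
       (x = b ∧ ∃ j t : ℤ, (t ≠ 0 ∧ -(k:ℤ) ≤ t ∧ t ≤ (k:ℤ)) ∧ n = 2*(k:ℤ) + 3*(k:ℤ)*j + t) ∨
       (x = c ∧ ∃ j t : ℤ, (t ≠ 0 ∧ -(k:ℤ) ≤ t ∧ t ≤ (k:ℤ)) ∧ n = 0 + 3*(k:ℤ)*j + t)) := by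
    intro x n
    constructor
    · rintro ⟨C, ⟨j, (rfl | rfl | rfl)⟩, hmemC⟩ <;> rw [mem_pcopy] at hmemC <;>
        obtain ⟨hx, t, ht, hn⟩ := hmemC
      · exact Or.inl ⟨hx, j, t, ht, hn⟩
      · exact Or.inr (Or.inl ⟨hx, j, t, ht, hn⟩)
      · exact Or.inr (Or.inr ⟨hx, j, t, ht, hn⟩)
    · rintro (⟨rfl, j, t, ht, hn⟩ | ⟨rfl, j, t, ht, hn⟩ | ⟨rfl, j, t, ht, hn⟩)
      · exact ⟨_, ⟨j, Or.inl rfl⟩, (mem_pcopy k x x _ n).mpr ⟨rfl, t, ht, hn⟩⟩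
      · exact ⟨_, ⟨j, Or.inr (Or.inl rfl)⟩, (mem_pcopy k x x _ n).mpr ⟨rfl, t, ht, hn⟩⟩
      · exact ⟨_, ⟨j, Or.inr (Or.inr rfl)⟩, (mem_pcopy k x x _ n).mpr ⟨rfl, t, ht, hn⟩⟩
  refine ⟨⋃₀ 𝒞, ?_, ⟨𝒞, ?_, ?_, rfl⟩, ?_⟩
  · -- Y ⊆ S ×ˢ univ
    rintro ⟨x, n⟩ hx
    rw [hY x n] at hx
    refine ⟨?_, trivial⟩
    rcases hx with ⟨rfl, -⟩ | ⟨rfl, -⟩ | ⟨rfl, -⟩ <;> simp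
  · -- copies have the right form
    rintro C ⟨j, (rfl | rfl | rfl)⟩
    · exact ⟨a, by simp, (k:ℤ) + 3*(k:ℤ)*j, rfl⟩
    · exact ⟨b, by simp, 2*(k:ℤ) + 3*(k:ℤ)*j, rfl⟩
    · exact ⟨c, by simp, 0 + 3*(k:ℤ)*j, rfl⟩
  · -- pairwise disjoint
    rintro C₁ ⟨j₁, (rfl | rfl | rfl)⟩ C₂ ⟨j₂, (rfl | rfl | rfl)⟩ hne <;>
      simp only [Function.onFun, id_eq]
    · rcases eq_or_ne j₁ j₂ with rfl | hj
      · exact absurd rfl hne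
      · exact pcopy_disj_far k a _ _ (far_of_ne (k:ℤ) (k:ℤ) j₁ j₂ hK1 hj)
    · exact pcopy_disj_ne k a b _ _ hab
    · exact pcopy_disj_ne k a c _ _ hac
    · exact pcopy_disj_ne k b a _ _ hab.symm
    · rcases eq_or_ne j₁ j₂ with rfl | hj
      · exact absurd rfl hne
      · exact pcopy_disj_far k b _ _ (far_of_ne (k:ℤ) (2*(k:ℤ)) j₁ j₂ hK1 hj)
    · exact pcopy_disj_ne k b c _ _ hbc
    · exact pcopy_disj_ne k c a _ _ hac.symm
    · exact pcopy_disj_ne k c b _ _ hbc.symm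
    · rcases eq_or_ne j₁ j₂ with rfl | hj
      · exact absurd rfl hne
      · exact pcopy_disj_far k c _ _ (far_of_ne (k:ℤ) 0 j₁ j₂ hK1 hj)
  · -- slices
    intro n
    have h3K : (0:ℤ) < 3*(k:ℤ) := by linarith
    have hr0 : 0 ≤ n % (3*(k:ℤ)) := Int.emod_nonneg n (by linarith)
    have hr1 : n % (3*(k:ℤ)) < 3*(k:ℤ) := Int.emod_lt_of_pos n h3K
    have hn' : 3*(k:ℤ) * (n / (3*(k:ℤ))) + n % (3*(k:ℤ)) = n := Int.mul_ediv_add_emod n (3*(k:ℤ))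
    set j0 := n / (3*(k:ℤ)) with hj0def
    set r := n % (3*(k:ℤ)) with hrdef
    -- membership iffs for the three columns, depending on the range of r
    have hA : (∃ j t : ℤ, (t ≠ 0 ∧ -(k:ℤ) ≤ t ∧ t ≤ (k:ℤ)) ∧ n = (k:ℤ) + 3*(k:ℤ)*j + t) ↔
        ((1 ≤ (if r < (k:ℤ) then r + 2*(k:ℤ) else r - (k:ℤ)) ∧
          (if r < (k:ℤ) then r + 2*(k:ℤ) else r - (k:ℤ)) ≤ (k:ℤ)) ∨
          2*(k:ℤ) ≤ (if r < (k:ℤ) then r + 2*(k:ℤ) else r - (k:ℤ))) := by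
      split_ifs with h
      · exact aux_col (k:ℤ) (k:ℤ) n (j0 - 1) (r + 2*(k:ℤ)) hK1 (by linear_combination -hn')
          (by omega) (by omega)
      · exact aux_col (k:ℤ) (k:ℤ) n j0 (r - (k:ℤ)) hK1 (by linear_combination -hn')
          (by omega) (by omega)
    have hB : (∃ j t : ℤ, (t ≠ 0 ∧ -(k:ℤ) ≤ t ∧ t ≤ (k:ℤ)) ∧ n = 2*(k:ℤ) + 3*(k:ℤ)*j + t) ↔
        ((1 ≤ (if r < 2*(k:ℤ) then r + (k:ℤ) else r - 2*(k:ℤ)) ∧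
          (if r < 2*(k:ℤ) then r + (k:ℤ) else r - 2*(k:ℤ)) ≤ (k:ℤ)) ∨
          2*(k:ℤ) ≤ (if r < 2*(k:ℤ) then r + (k:ℤ) else r - 2*(k:ℤ))) := by
      split_ifs with h
      · exact aux_col (k:ℤ) (2*(k:ℤ)) n (j0 - 1) (r + (k:ℤ)) hK1 (by linear_combination -hn')
          (by omega) (by omega)
      · exact aux_col (k:ℤ) (2*(k:ℤ)) n j0 (r - 2*(k:ℤ)) hK1 (by linear_combination -hn')
          (by omega) (by omega)
    have hC : (∃ j t : ℤ, (t ≠ 0 ∧ -(k:ℤ) ≤ t ∧ t ≤ (k:ℤ)) ∧ n = 0 + 3*(k:ℤ)*j + t) ↔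
        ((1 ≤ r ∧ r ≤ (k:ℤ)) ∨ 2*(k:ℤ) ≤ r) :=
      aux_col (k:ℤ) 0 n j0 r hK1 (by linear_combination -hn') (by omega) (by omega)
    -- determine which two columns contain level n
    have key : ∀ x₁ x₂ : Fin d → ℤ, x₁ ≠ x₂ →
        (⋃₀ 𝒞 ∩ ({a, b, c} : Set (Fin d → ℤ)) ×ˢ ({n} : Set ℤ)) = {(x₁, n), (x₂, n)} →
        (⋃₀ 𝒞 ∩ ({a, b, c} : Set (Fin d → ℤ)) ×ˢ ({n} : Set ℤ)).ncard = 2 := by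
      intro x₁ x₂ hx12 hset
      rw [hset]
      exact Set.ncard_pair (by simp [Prod.ext_iff, hx12])
    rcases (by omega : (r = 0 ∨ ((k:ℤ)+1 ≤ r ∧ r ≤ 2*(k:ℤ)-1)) ∨
        ((1 ≤ r ∧ r ≤ (k:ℤ)-1) ∨ r = 2*(k:ℤ)) ∨
        (r = (k:ℤ) ∨ 2*(k:ℤ)+1 ≤ r)) with hcase | hcase | hcase
    · -- slice = {a, b}
      have hPA := hA.mpr (by split_ifs <;> omega)
      have hPB := hB.mpr (by split_ifs <;> omega)
      have hNC : ¬(∃ j t : ℤ, (t ≠ 0 ∧ -(k:ℤ) ≤ t ∧ t ≤ (k:ℤ)) ∧ n = 0 + 3*(k:ℤ)*j + t) :=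
        fun h => by have := hC.mp h; omega
      refine key a b hab ?_
      ext ⟨x, m⟩
      simp only [Set.mem_inter_iff, Set.mem_prod, Set.mem_singleton_iff, Set.mem_insert_iff,
        hY x m, Prod.mk.injEq]
      constructor
      · rintro ⟨h, -, rfl⟩
        rcases h with ⟨rfl, hQ⟩ | ⟨rfl, hQ⟩ | ⟨rfl, hQ⟩
        · exact Or.inl ⟨rfl, rfl⟩
        · exact Or.inr ⟨rfl, rfl⟩
        · exact absurd hQ hNC
      · rintro (⟨rfl, rfl⟩ | ⟨rfl, rfl⟩)
        · exact ⟨Or.inl ⟨rfl, hPA⟩, Or.inl rfl, rfl⟩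
        · exact ⟨Or.inr (Or.inl ⟨rfl, hPB⟩), Or.inr (Or.inl rfl), rfl⟩
    · -- slice = {a, c}
      have hPA := hA.mpr (by split_ifs <;> omega)
      have hPC := hC.mpr (by omega)
      have hNB : ¬(∃ j t : ℤ, (t ≠ 0 ∧ -(k:ℤ) ≤ t ∧ t ≤ (k:ℤ)) ∧ n = 2*(k:ℤ) + 3*(k:ℤ)*j + t) :=
        fun h => by have := hB.mp h; split_ifs at this <;> omega
      refine key a c hac ?_
      ext ⟨x, m⟩
      simp only [Set.mem_inter_iff, Set.mem_prod, Set.mem_singleton_iff, Set.mem_insert_iff,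
        hY x m, Prod.mk.injEq]
      constructor
      · rintro ⟨h, -, rfl⟩
        rcases h with ⟨rfl, hQ⟩ | ⟨rfl, hQ⟩ | ⟨rfl, hQ⟩
        · exact Or.inl ⟨rfl, rfl⟩
        · exact absurd hQ hNB
        · exact Or.inr ⟨rfl, rfl⟩
      · rintro (⟨rfl, rfl⟩ | ⟨rfl, rfl⟩)
        · exact ⟨Or.inl ⟨rfl, hPA⟩, Or.inl rfl, rfl⟩
        · exact ⟨Or.inr (Or.inr ⟨rfl, hPC⟩), Or.inr (Or.inr rfl), rfl⟩
    · -- slice = {b, c}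
      have hPB := hB.mpr (by split_ifs <;> omega)
      have hPC := hC.mpr (by omega)
      have hNA : ¬(∃ j t : ℤ, (t ≠ 0 ∧ -(k:ℤ) ≤ t ∧ t ≤ (k:ℤ)) ∧ n = (k:ℤ) + 3*(k:ℤ)*j + t) :=
        fun h => by have := hA.mp h; split_ifs at this <;> omega
      refine key b c hbc ?_
      ext ⟨x, m⟩
      simp only [Set.mem_inter_iff, Set.mem_prod, Set.mem_singleton_iff, Set.mem_insert_iff,
        hY x m, Prod.mk.injEq]
      constructor
      · rintro ⟨h, -, rfl⟩
        rcases h with ⟨rfl, hQ⟩ | ⟨rfl, hQ⟩ | ⟨rfl, hQ⟩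
        · exact absurd hQ hNA
        · exact Or.inl ⟨rfl, rfl⟩
        · exact Or.inr ⟨rfl, rfl⟩
      · rintro (⟨rfl, rfl⟩ | ⟨rfl, rfl⟩)
        · exact ⟨Or.inr (Or.inl ⟨rfl, hPB⟩), Or.inr (Or.inl rfl), rfl⟩
        · exact ⟨Or.inr (Or.inr ⟨rfl, hPC⟩), Or.inr (Or.inr rfl), rfl⟩
end

section
/- Let k ≥ 3, let d ≥ 1 and let A ⊆ ℤ^d with |A| = 3k. Then there exists a set B ⊆ A × ℤ ⊆ ℤ^{d+1} such that B is a disjoint union of copies of T_k each lying in the last coordinate direction (i.e. each copy has the form {(a, m+t) : t ∈ T_k} for some a ∈ A and m ∈ ℤ), and for every n ∈ ℤ the intersection B ∩ (A × {n}) has exactly k+1 elements if n mod 2k ∈ {1, …, k}, and exactly k−1 elements otherwise (i.e. if n ≡ k+1, …, 2k−1 or 0 (mod 2k)). -/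
def isCenter (k : ℕ) (m : ℤ) : Prop :=
  1 ≤ (m - (k:ℤ)) % (2*(k:ℤ)) ∧ (m - (k:ℤ)) % (2*(k:ℤ)) ≤ (k:ℤ)

instance (k : ℕ) : DecidablePred (isCenter k) := fun m => by unfold isCenter; infer_instance

def colIdx (k : ℕ) (m : ℤ) : ℤ :=
  ((m - (k:ℤ) - 1) / (2*(k:ℤ))) * (k:ℤ) + ((m - (k:ℤ) - 1) % (2*(k:ℤ))) + 1

lemma small_mul_eq_zero (K u : ℤ) (hK : 0 < K) (h1 : -K < K*u) (h2 : K*u < K) : u = 0 := by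
  rcases lt_trichotomy u 0 with h | h | h
  · exfalso; nlinarith
  · exact h
  · exfalso; nlinarith

lemma colIdx_decomp (k : ℕ) (hk : 3 ≤ k) (m : ℤ) (hm : isCenter k m) :
    ∃ j r : ℤ, m = 2*(k:ℤ)*j + (k:ℤ) + 1 + r ∧ 0 ≤ r ∧ r ≤ (k:ℤ) - 1 ∧
      colIdx k m = j*(k:ℤ) + r + 1 := by
  have hK : (3:ℤ) ≤ (k:ℤ) := by exact_mod_cast hk
  obtain ⟨h1, h2⟩ := hm
  refine ⟨(m - (k:ℤ) - 1) / (2*(k:ℤ)), (m - (k:ℤ) - 1) % (2*(k:ℤ)), ?_, ?_, ?_, rfl⟩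
  · have := Int.mul_ediv_add_emod (m - (k:ℤ) - 1) (2*(k:ℤ))
    omega
  · exact Int.emod_nonneg _ (by omega)
  · have h1m : (1:ℤ) % (2*(k:ℤ)) = 1 := Int.emod_eq_of_lt (by norm_num) (by omega)
    have key : (m - (k:ℤ) - 1) % (2*(k:ℤ)) = ((m - (k:ℤ)) % (2*(k:ℤ)) - 1) % (2*(k:ℤ)) := by
      rw [Int.sub_emod (m - (k:ℤ)) 1, h1m]
    rw [key, Int.emod_eq_of_lt (by omega) (by omega)]
    omega

lemma colIdx_cong (k : ℕ) (hk : 3 ≤ k) (m m' : ℤ) (hm : isCenter k m) (hm' : isCenter k m')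
    (h : (3*(k:ℤ)) ∣ colIdx k m - colIdx k m') : (6*(k:ℤ)) ∣ m - m' := by
  have hK : (3:ℤ) ≤ (k:ℤ) := by exact_mod_cast hk
  obtain ⟨j, r, he, hr0, hr1, hc⟩ := colIdx_decomp k hk m hm
  obtain ⟨j', r', he', hr0', hr1', hc'⟩ := colIdx_decomp k hk m' hm'
  obtain ⟨t, ht⟩ := h
  rw [hc, hc'] at ht
  have hrr : r - r' = (k:ℤ) * (3*t - (j - j')) := by linear_combination ht
  have hu : 3*t - (j - j') = 0 := by
    apply small_mul_eq_zero (k:ℤ) _ (by omega) <;> omega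
  have hrr0 : r = r' := by rw [hu, mul_zero] at hrr; omega
  have hjj : j - j' = 3 * t := by omega
  exact ⟨t, by linear_combination 2*(k:ℤ)*hjj + he - he' + hrr0⟩

lemma card_window (N c a : ℤ) (hN : 0 < N) (p : ℤ → Prop) [DecidablePred p] :
    ((Finset.Ico a (a+N)).filter (fun m => p ((m - c) % N))).card
      = ((Finset.Ico 0 N).filter p).card := by
  have hmod : ∀ x y : ℤ, (x + y % N) % N = (x + y) % N := by
    intro x y
    conv_rhs => rw [Int.add_emod]
    rw [Int.add_emod x (y % N), Int.emod_emod_of_dvd _ dvd_rfl]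
  have hji : ∀ m : ℤ, a ≤ m → m < a + N → a + (c + (m - c) % N - a) % N = m := by
    intro m h1 h2
    have e : (c + (m - c) % N - a) % N = (m - a) % N := by
      have h3 := hmod (c - a) (m - c)
      have e1 : c + (m - c) % N - a = (c - a) + (m - c) % N := by ring
      have e2 : (c - a) + (m - c) = m - a := by ring
      rw [e1, h3, e2]
    rw [e, Int.emod_eq_of_lt (by omega) (by omega)]
    ring
  have hij : ∀ r : ℤ, 0 ≤ r → r < N → (a + (c + r - a) % N - c) % N = r := by
    intro r h1 h2
    have h3 := hmod (a - c) (c + r - a)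
    have e1 : a + (c + r - a) % N - c = (a - c) + (c + r - a) % N := by ring
    have e2 : (a - c) + (c + r - a) = r := by ring
    rw [e1, h3, e2, Int.emod_eq_of_lt h1 h2]
  apply Finset.card_bij' (fun m _ => (m - c) % N) (fun r _ => a + (c + r - a) % N)
  · intro m hm
    simp only [Finset.mem_filter, Finset.mem_Ico] at hm ⊢
    exact ⟨⟨Int.emod_nonneg _ (by omega), Int.emod_lt_of_pos _ hN⟩, hm.2⟩
  · intro r hr
    simp only [Finset.mem_filter, Finset.mem_Ico] at hr ⊢
    have h1 : 0 ≤ (c + r - a) % N := Int.emod_nonneg _ (by omega)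
    have h2 : (c + r - a) % N < N := Int.emod_lt_of_pos _ hN
    refine ⟨⟨by omega, by omega⟩, ?_⟩
    rw [hij r hr.1.1 hr.1.2]; exact hr.2
  · intro m hm
    simp only [Finset.mem_filter, Finset.mem_Ico] at hm
    exact hji m hm.1.1 hm.1.2
  · intro r hr
    simp only [Finset.mem_filter, Finset.mem_Ico] at hr
    exact hij r hr.1.1 hr.1.2

lemma emod_sub_k (k : ℕ) (hk : 3 ≤ k) (n : ℤ) :
    (n - (k:ℤ)) % (2*(k:ℤ)) =
      if (k:ℤ) ≤ n % (2*(k:ℤ)) then n % (2*(k:ℤ)) - (k:ℤ) else n % (2*(k:ℤ)) + (k:ℤ) := by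
  have hK : (3:ℤ) ≤ (k:ℤ) := by exact_mod_cast hk
  have hb1 : 0 ≤ n % (2*(k:ℤ)) := Int.emod_nonneg _ (by omega)
  have hb2 : n % (2*(k:ℤ)) < 2*(k:ℤ) := Int.emod_lt_of_pos _ (by omega)
  have step : (n - (k:ℤ)) % (2*(k:ℤ)) = (n % (2*(k:ℤ)) - (k:ℤ)) % (2*(k:ℤ)) := by
    rw [Int.sub_emod, Int.emod_eq_of_lt (by omega : (0:ℤ) ≤ (k:ℤ)) (by omega)]
  split_ifs with h
  · rw [step, Int.emod_eq_of_lt (by omega) (by omega)]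
  · have e : (n % (2*(k:ℤ)) - (k:ℤ)) % (2*(k:ℤ))
        = (n % (2*(k:ℤ)) - (k:ℤ) + 2*(k:ℤ)*1) % (2*(k:ℤ)) := (Int.add_mul_emod_self_left (a := n % (2*(k:ℤ)) - (k:ℤ)) (b := 2*(k:ℤ)) (c := 1)).symm
    rw [step, e, show n % (2*(k:ℤ)) - (k:ℤ) + 2*(k:ℤ)*1 = n % (2*(k:ℤ)) + (k:ℤ) by ring,
      Int.emod_eq_of_lt (by omega) (by omega)]

lemma card_centers (k : ℕ) (hk : 3 ≤ k) (n : ℤ) :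
    ((Finset.Icc (n - (k:ℤ)) (n + (k:ℤ))).filter (fun m => isCenter k m ∧ m ≠ n)).card
      = if 1 ≤ n % (2*(k:ℤ)) ∧ n % (2*(k:ℤ)) ≤ (k:ℤ) then k + 1 else k - 1 := by
  have hK : (3:ℤ) ≤ (k:ℤ) := by exact_mod_cast hk
  have hb1 : 0 ≤ n % (2*(k:ℤ)) := Int.emod_nonneg _ (by omega)
  have hb2 : n % (2*(k:ℤ)) < 2*(k:ℤ) := Int.emod_lt_of_pos _ (by omega)
  have hIco : ((Finset.Ico (n-(k:ℤ)) (n+(k:ℤ))).filter (fun m => isCenter k m)).card = k := by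
    have e1 : n + (k:ℤ) = (n - (k:ℤ)) + 2*(k:ℤ) := by ring
    have e2 : ((Finset.Ico (n-(k:ℤ)) ((n-(k:ℤ)) + 2*(k:ℤ))).filter
        (fun m => (fun x => 1 ≤ x ∧ x ≤ (k:ℤ)) ((m - (k:ℤ)) % (2*(k:ℤ))))).card
        = ((Finset.Ico (0:ℤ) (2*(k:ℤ))).filter (fun x => 1 ≤ x ∧ x ≤ (k:ℤ))).card :=
      card_window (2*(k:ℤ)) (k:ℤ) (n-(k:ℤ)) (by omega) (fun x => 1 ≤ x ∧ x ≤ (k:ℤ))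
    have e3 : (Finset.Ico (0:ℤ) (2*(k:ℤ))).filter (fun x => 1 ≤ x ∧ x ≤ (k:ℤ))
        = Finset.Icc (1:ℤ) (k:ℤ) := by
      ext x
      simp only [Finset.mem_filter, Finset.mem_Ico, Finset.mem_Icc]
      omega
    rw [e1]
    have e4 : (Finset.Ico (n-(k:ℤ)) ((n-(k:ℤ)) + 2*(k:ℤ))).filter (fun m => isCenter k m)
        = (Finset.Ico (n-(k:ℤ)) ((n-(k:ℤ)) + 2*(k:ℤ))).filter
          (fun m => (fun x => 1 ≤ x ∧ x ≤ (k:ℤ)) ((m - (k:ℤ)) % (2*(k:ℤ)))) := by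
      ext x
      rw [Finset.mem_filter, Finset.mem_filter]
      simp only [Finset.mem_filter, isCenter]
    rw [e4, e2, e3, Int.card_Icc]
    omega
  have hplus : isCenter k (n + (k:ℤ)) ↔ (1 ≤ n % (2*(k:ℤ)) ∧ n % (2*(k:ℤ)) ≤ (k:ℤ)) := by
    unfold isCenter
    rw [add_sub_cancel_right]
  have hcomp : isCenter k n ↔ ¬(1 ≤ n % (2*(k:ℤ)) ∧ n % (2*(k:ℤ)) ≤ (k:ℤ)) := by
    unfold isCenter
    rw [emod_sub_k k hk n]
    split_ifs with h <;> omega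
  have hIcc : ((Finset.Icc (n-(k:ℤ)) (n+(k:ℤ))).filter (fun m => isCenter k m)).card
      = k + if isCenter k (n+(k:ℤ)) then 1 else 0 := by
    rw [← Finset.Ico_insert_right (show n-(k:ℤ) ≤ n+(k:ℤ) by omega), Finset.filter_insert]
    split_ifs with h
    · rw [Finset.card_insert_of_notMem (by simp), hIco]
    · rw [hIco]; ring
  have hsplit : (Finset.Icc (n - (k:ℤ)) (n + (k:ℤ))).filter (fun m => isCenter k m ∧ m ≠ n)
      = ((Finset.Icc (n - (k:ℤ)) (n + (k:ℤ))).filter (fun m => isCenter k m)).erase n := by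
    ext x
    simp only [Finset.mem_filter, Finset.mem_erase, Finset.mem_Icc]
    tauto
  rw [hsplit]
  by_cases hcond : 1 ≤ n % (2*(k:ℤ)) ∧ n % (2*(k:ℤ)) ≤ (k:ℤ)
  · rw [if_pos hcond]
    rw [Finset.erase_eq_of_notMem (by
      simp only [Finset.mem_filter]
      intro hx
      exact (hcomp.mp hx.2) hcond)]
    rw [hIcc, if_pos (hplus.mpr hcond)]
  · rw [if_neg hcond]
    rw [Finset.card_erase_of_mem (by
      simp only [Finset.mem_filter, Finset.mem_Icc]
      exact ⟨⟨by omega, by omega⟩, hcomp.mpr hcond⟩)]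
    rw [hIcc, if_neg (fun h => hcond (hplus.mp h))]
    omega

lemma dvd_small_zero (K a : ℤ) (hK : 0 < K) (h : 6*K ∣ a) (h1 : -(2*K) ≤ a) (h2 : a ≤ 2*K) :
    a = 0 := by
  obtain ⟨t, rfl⟩ := h
  rcases lt_trichotomy t 0 with h | h | h
  · nlinarith
  · rw [h, mul_zero]
  · nlinarith


/-- Lemma 4 of the paper: given `A ⊆ ℤ^d` with `|A| = 3k`, there is a set
`B ⊆ A × ℤ` which is a disjoint union of copies of `T_k` in the last coordinate
direction and meets the slice `A × {n}` in exactly `k+1` points when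
`n mod 2k ∈ {1, …, k}` and in exactly `k-1` points otherwise. -/
theorem exists_B_levels (k : ℕ) (hk : 3 ≤ k) (d : ℕ) (hd : 1 ≤ d)
    (A : Set (Fin d → ℤ)) (hA : A.ncard = 3 * k) :
    ∃ B : Set ((Fin d → ℤ) × ℤ),
      B ⊆ A ×ˢ (Set.univ : Set ℤ) ∧
      (∃ 𝒞 : Set (Set ((Fin d → ℤ) × ℤ)),
        (∀ C ∈ 𝒞, ∃ a ∈ A, ∃ m : ℤ,
          C = (fun t : ℤ => (a, m + t)) '' puncturedInterval k) ∧
        𝒞.PairwiseDisjoint id ∧ ⋃₀ 𝒞 = B) ∧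
      ∀ n : ℤ, (B ∩ A ×ˢ ({n} : Set ℤ)).ncard =
        if 1 ≤ n % (2 * (k : ℤ)) ∧ n % (2 * (k : ℤ)) ≤ (k : ℤ) then k + 1 else k - 1 := by
  classical
  have hK : (3:ℤ) ≤ (k:ℤ) := by exact_mod_cast hk
  have hfin : A.Finite := Set.finite_of_ncard_ne_zero (by omega)
  have hcard : hfin.toFinset.card = 3 * k := by
    rw [← Set.ncard_eq_toFinset_card A hfin]; exact hA
  let e := Finset.equivFinOfCardEq hcard
  have h3k : ∀ c : ℤ, (c % ((3*k : ℕ) : ℤ)).toNat < 3 * k := by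
    intro c
    have h1 : 0 ≤ c % ((3*k : ℕ) : ℤ) := Int.emod_nonneg _ (by push_cast; omega)
    have h2 : c % ((3*k : ℕ) : ℤ) < ((3*k : ℕ) : ℤ) := Int.emod_lt_of_pos _ (by push_cast; omega)
    omega
  set g : ℤ → (Fin d → ℤ) := fun c => (e.symm ⟨(c % ((3*k : ℕ) : ℤ)).toNat, h3k c⟩ : _) with hg
  have hgA : ∀ c, g c ∈ A := by
    intro c
    have := (e.symm ⟨(c % ((3*k : ℕ) : ℤ)).toNat, h3k c⟩).2
    rw [Set.Finite.mem_toFinset] at this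
    exact this
  have hginj : ∀ c c' : ℤ, g c = g c' → c % ((3*k : ℕ) : ℤ) = c' % ((3*k : ℕ) : ℤ) := by
    intro c c' hcc
    have h1 : (e.symm ⟨(c % ((3*k : ℕ) : ℤ)).toNat, h3k c⟩)
        = (e.symm ⟨(c' % ((3*k : ℕ) : ℤ)).toNat, h3k c'⟩) := Subtype.coe_injective hcc
    have h2 := e.symm.injective h1
    have h3 : (c % ((3*k : ℕ) : ℤ)).toNat = (c' % ((3*k : ℕ) : ℤ)).toNat := by
      exact congrArg Fin.val h2
    have h4 : 0 ≤ c % ((3*k : ℕ) : ℤ) := Int.emod_nonneg _ (by push_cast; omega)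
    have h5 : 0 ≤ c' % ((3*k : ℕ) : ℤ) := Int.emod_nonneg _ (by push_cast; omega)
    omega
  set f : ℤ → (Fin d → ℤ) := fun m => g (colIdx k m) with hf
  have hf2 : ∀ m m', isCenter k m → isCenter k m' → f m = f m' → (6*(k:ℤ)) ∣ m - m' := by
    intro m m' hm hm' hff
    apply colIdx_cong k hk m m' hm hm'
    have := hginj _ _ hff
    have hmod : colIdx k m ≡ colIdx k m' [ZMOD ((3*k:ℕ):ℤ)] := this
    have := Int.ModEq.dvd hmod
    have e3 : ((3*k : ℕ) : ℤ) = 3*(k:ℤ) := by push_cast; ring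
    rw [e3] at this
    exact (dvd_sub_comm).mp this
  have hzero : ∀ m m', isCenter k m → isCenter k m' → f m = f m' →
      -(2*(k:ℤ)) ≤ m - m' → m - m' ≤ 2*(k:ℤ) → m = m' := by
    intro m m' hm hm' hff hb1 hb2
    have := dvd_small_zero (k:ℤ) (m - m') (by omega) (hf2 m m' hm hm' hff) hb1 hb2
    omega
  set cop : ℤ → Set ((Fin d → ℤ) × ℤ) :=
    fun m => (fun t : ℤ => (f m, m + t)) '' puncturedInterval k with hcop
  set 𝒞 : Set (Set ((Fin d → ℤ) × ℤ)) := {C | ∃ m, isCenter k m ∧ C = cop m} with hC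
  refine ⟨⋃₀ 𝒞, ?_, ⟨𝒞, ?_, ?_, rfl⟩, ?_⟩
  · rintro p ⟨C, ⟨m, hm, rfl⟩, ⟨t, ht, rfl⟩⟩
    exact ⟨hgA _, Set.mem_univ _⟩
  · rintro C ⟨m, hm, rfl⟩
    exact ⟨f m, hgA _, m, rfl⟩
  · rintro C ⟨m, hm, rfl⟩ C' ⟨m', hm', rfl⟩ hne
    show Disjoint (cop m) (cop m')
    rw [Set.disjoint_left]
    rintro p ⟨t, ht, rfl⟩ ⟨t', ht', hpe⟩
    obtain ⟨ht0, ht1, ht2⟩ := ht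
    obtain ⟨ht0', ht1', ht2'⟩ := ht'
    have hfst : f m' = f m := congrArg Prod.fst hpe
    have hsnd : m' + t' = m + t := congrArg Prod.snd hpe
    have : m = m' := hzero m m' hm hm' hfst.symm (by omega) (by omega)
    exact hne (by rw [this])
  · intro n
    have hinj : Set.InjOn (fun m => (f m, n))
        (((Finset.Icc (n - (k:ℤ)) (n + (k:ℤ))).filter
          (fun m => isCenter k m ∧ m ≠ n) : Finset ℤ) : Set ℤ) := by
      intro m hm m' hm' heq
      simp only [Finset.coe_filter, Set.mem_setOf_eq, Finset.mem_Icc] at hm hm'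
      have hfe : f m = f m' := congrArg Prod.fst heq
      exact hzero m m' hm.2.1 hm'.2.1 hfe (by omega) (by omega)
    have hset : (⋃₀ 𝒞) ∩ A ×ˢ ({n} : Set ℤ) = (fun m => (f m, n)) ''
        (((Finset.Icc (n - (k:ℤ)) (n + (k:ℤ))).filter
          (fun m => isCenter k m ∧ m ≠ n) : Finset ℤ) : Set ℤ) := by
      ext p
      constructor
      · rintro ⟨⟨C, ⟨m, hm, rfl⟩, ⟨t, ht, rfl⟩⟩, hpA⟩
        obtain ⟨ht0, ht1, ht2⟩ := ht
        have hn : m + t = n := hpA.2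
        refine ⟨m, ?_, ?_⟩
        · simp only [Finset.coe_filter, Set.mem_setOf_eq, Finset.mem_Icc]
          exact ⟨⟨by omega, by omega⟩, hm, by omega⟩
        · simp only
          rw [← hn]
      · rintro ⟨m, hmF, rfl⟩
        simp only [Finset.coe_filter, Set.mem_setOf_eq, Finset.mem_Icc] at hmF
        obtain ⟨⟨hle, hge⟩, hc, hne⟩ := hmF
        refine ⟨⟨cop m, ⟨m, hc, rfl⟩, ⟨n - m, ⟨by omega, by omega, by omega⟩, by simp⟩⟩,
          hgA _, rfl⟩
    rw [hset, Set.ncard_image_of_injOn hinj, Set.ncard_coe_finset, card_centers k hk n]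
end

section
/- For every positive integer k and every point x ∈ (ℤ/(k+1)ℤ)², the set (ℤ/(k+1)ℤ)² \ {x} can be partitioned into pairwise disjoint strings of the torus (ℤ/(k+1)ℤ)². -/
/-- A string in the torus `(ℤ/(k+1)ℤ)²`: a row or column with one of its points removed. -/
def IsTorusString (k : ℕ) (L : Set (ZMod (k + 1) × ZMod (k + 1))) : Prop :=
  (∃ (c : ZMod (k + 1)) (p : ZMod (k + 1) × ZMod (k + 1)),
    p.2 = c ∧ L = {q : ZMod (k + 1) × ZMod (k + 1) | q.2 = c} \ {p}) ∨
  (∃ (c : ZMod (k + 1)) (p : ZMod (k + 1) × ZMod (k + 1)),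
    p.1 = c ∧ L = {q : ZMod (k + 1) × ZMod (k + 1) | q.1 = c} \ {p})

/-- The torus `(ℤ/(k+1)ℤ)²` minus a single point can be partitioned into strings. -/
theorem torus_minus_point_tiled_by_strings (k : ℕ) (hk : 0 < k)
    (x : ZMod (k + 1) × ZMod (k + 1)) :
    ∃ 𝒞 : Set (Set (ZMod (k + 1) × ZMod (k + 1))),
      (∀ L ∈ 𝒞, IsTorusString k L) ∧ 𝒞.PairwiseDisjoint id ∧
      ⋃₀ 𝒞 = ({x}ᶜ : Set (ZMod (k + 1) × ZMod (k + 1))) := by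
  classical
  set C : Set (ZMod (k + 1) × ZMod (k + 1)) :=
    {q : ZMod (k + 1) × ZMod (k + 1) | q.1 = x.1} \ {x} with hC
  set R : ZMod (k + 1) → Set (ZMod (k + 1) × ZMod (k + 1)) := fun c =>
    {q : ZMod (k + 1) × ZMod (k + 1) | q.2 = c} \ {(x.1, c)} with hR
  refine ⟨insert C (Set.range R), ?_, ?_, ?_⟩
  · rintro L hL
    rcases hL with rfl | ⟨c, rfl⟩
    · exact Or.inr ⟨x.1, x, rfl, rfl⟩
    · exact Or.inl ⟨c, (x.1, c), rfl, rfl⟩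
  · rintro A hA B hB hAB
    have key : ∀ A B : Set (ZMod (k + 1) × ZMod (k + 1)),
        A ∈ insert C (Set.range R) → B ∈ insert C (Set.range R) → A ≠ B →
        Disjoint A B := by
      rintro A B hA hB hAB
      rcases hA with rfl | ⟨c, rfl⟩ <;> rcases hB with rfl | ⟨d, rfl⟩
      · exact absurd rfl hAB
      · rw [Set.disjoint_left]
        rintro ⟨a, b⟩ ⟨ha1, ha2⟩ ⟨hb1, hb2⟩
        simp only [Set.mem_setOf_eq] at ha1 hb1
        exact hb2 (by simp [ha1, hb1])
      · rw [Set.disjoint_left]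
        rintro ⟨a, b⟩ ⟨ha1, ha2⟩ ⟨hb1, hb2⟩
        simp only [Set.mem_setOf_eq] at ha1 hb1
        exact ha2 (by simp [ha1, hb1])
      · by_cases hcd : c = d
        · exact absurd (by rw [hcd]) hAB
        · rw [Set.disjoint_left]
          rintro ⟨a, b⟩ ⟨ha1, _⟩ ⟨hb1, _⟩
          simp only [Set.mem_setOf_eq] at ha1 hb1
          exact hcd (ha1 ▸ hb1)
    exact key A B hA hB hAB
  · ext ⟨a, b⟩
    simp only [Set.mem_sUnion, Set.mem_compl_iff, Set.mem_singleton_iff]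
    constructor
    · rintro ⟨L, hL, hmem⟩
      rcases hL with rfl | ⟨c, rfl⟩
      · exact fun h => hmem.2 (by simp [h])
      · rintro rfl
        exact hmem.2 (by simp [show b = c from hmem.1])
    · intro hne
      by_cases h1 : a = x.1
      · exact ⟨C, Set.mem_insert _ _, h1, hne⟩
      · refine ⟨R b, Set.mem_insert_of_mem _ ⟨b, rfl⟩, ?_, ?_⟩
        · simp
        · simp only [Set.mem_singleton_iff, Prod.mk.injEq]
          rintro ⟨h, -⟩; exact h1 h
end

section
/- For every positive integer k and every integer r, the set {m ∈ ℤ : m ≢ r (mod k+1)} (a line with every (k+1)-th point removed, i.e. a string) is a disjoint union of translates of T_k; explicitly, it is the disjoint union over n ∈ ℤ of the sets {r + 2n(k+1) + t : t ∈ T_k}. -/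
/-- A string in `ℤ` (a line with every `(k+1)`-th point removed) is the disjoint
union of the translates of `T_k` by `r + 2n(k+1)`, `n ∈ ℤ`. -/
theorem string_is_disjoint_union_of_translates (k : ℕ) (hk : 0 < k) (r : ℤ) :
    (Set.univ : Set ℤ).PairwiseDisjoint
      (fun n : ℤ => (fun t : ℤ => r + 2 * n * ((k : ℤ) + 1) + t) '' puncturedInterval k) ∧
    ⋃ n : ℤ, (fun t : ℤ => r + 2 * n * ((k : ℤ) + 1) + t) '' puncturedInterval k =
      {m : ℤ | ¬ m ≡ r [ZMOD ((k : ℤ) + 1)]} := by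
  constructor
  · intro a _ b _ hab
    simp only [Set.disjoint_left]
    rintro x ⟨t, ⟨ht0, ht1, ht2⟩, rfl⟩ ⟨t', ⟨ht0', ht1', ht2'⟩, hx⟩
    simp only at hx
    have h : t - t' = 2 * (b - a) * ((k : ℤ) + 1) := by linarith [hx]
    rcases lt_trichotomy a b with hc | hc | hc
    · have h1 : (1 : ℤ) ≤ b - a := by omega
      nlinarith
    · exact hab hc
    · have h1 : b - a ≤ -1 := by omega
      nlinarith
  · ext m
    simp only [Set.mem_iUnion, Set.mem_image, Set.mem_setOf_eq, puncturedInterval]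
    have key : (m ≡ r [ZMOD ((k:ℤ)+1)]) ↔ ((k:ℤ)+1) ∣ (m - r) := by
      rw [Int.modEq_iff_dvd, dvd_sub_comm]
    rw [key]
    constructor
    · rintro ⟨n, t, ⟨ht0, ht1, ht2⟩, rfl⟩ ⟨c, hc⟩
      have hd : ((k:ℤ)+1) ∣ t := ⟨c - 2 * n, by linarith⟩
      obtain ⟨q, hq⟩ := hd
      rcases lt_trichotomy q 0 with h | h | h
      · have h1 : q ≤ -1 := by omega
        nlinarith
      · subst h; simp at hq; omega
      · have h1 : (1:ℤ) ≤ q := by omega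
        nlinarith
    · intro hnd
      set N : ℤ := 2 * ((k : ℤ) + 1) with hN
      have hNpos : 0 < N := by positivity
      refine ⟨(m - r + k) / N, m - r - 2 * ((m - r + k) / N) * ((k:ℤ)+1), ?_, by ring⟩
      have h1 := Int.emod_nonneg (m - r + k) (ne_of_gt hNpos)
      have h2 := Int.emod_lt_of_pos (m - r + k) hNpos
      have h3 := Int.mul_ediv_add_emod (m - r + k) N
      set n := (m - r + k) / N with hn
      set e := (m - r + k) % N with he
      have ht : m - r - 2 * n * ((k:ℤ)+1) = e - k := by
        rw [hN] at h3; linarith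
      refine ⟨?_, by omega, ?_⟩
      · intro h0
        exact hnd ⟨2 * n, by linarith⟩
      · by_contra hle
        push_neg at hle
        have heq : m - r - 2 * n * ((k:ℤ)+1) = (k:ℤ) + 1 := by omega
        exact hnd ⟨2 * n + 1, by linarith⟩
end

section
/- Let k be a positive integer and let X ⊆ (ℤ/(k+1)ℤ)² be a set that contains either exactly one point in every row or exactly one point in every column. Then the complement (ℤ/(k+1)ℤ)² \ X can be partitioned into pairwise disjoint strings of the torus (ℤ/(k+1)ℤ)². -/
/-- If `X ⊆ (ℤ/(k+1)ℤ)²` contains exactly one point in every row, or exactly one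
point in every column, then its complement can be partitioned into strings. -/
theorem complement_of_transversal_tiled_by_strings (k : ℕ) (hk : 0 < k)
    (X : Set (ZMod (k + 1) × ZMod (k + 1)))
    (hX : (∀ j : ZMod (k + 1), ∃! i : ZMod (k + 1), (i, j) ∈ X) ∨
          (∀ i : ZMod (k + 1), ∃! j : ZMod (k + 1), (i, j) ∈ X)) :
    ∃ 𝒞 : Set (Set (ZMod (k + 1) × ZMod (k + 1))),
      (∀ L ∈ 𝒞, IsTorusString k L) ∧ 𝒞.PairwiseDisjoint id ∧ ⋃₀ 𝒞 = Xᶜ := by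
  rcases hX with hX | hX
  · choose f hf hf' using hX
    refine ⟨Set.range (fun j => {q : ZMod (k + 1) × ZMod (k + 1) | q.2 = j} \ {(f j, j)}),
      ?_, ?_, ?_⟩
    · rintro L ⟨j, rfl⟩
      exact Or.inl ⟨j, (f j, j), rfl, rfl⟩
    · rintro L ⟨j, rfl⟩ M ⟨j', rfl⟩ hLM
      have hjj' : j ≠ j' := by rintro rfl; exact hLM rfl
      refine Set.disjoint_left.2 ?_
      rintro q ⟨hq, _⟩ ⟨hq', _⟩
      exact hjj' (hq ▸ hq')
    · ext q
      simp only [Set.mem_sUnion, Set.mem_range, Set.mem_compl_iff]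
      constructor
      · rintro ⟨L, ⟨j, rfl⟩, hq, hq'⟩ hqX
        apply hq'
        have : q.1 = f j := hf' j q.1 (by show _ ∈ X; rw [← hq]; simpa using hqX)
        simp only [Set.mem_singleton_iff]
        exact Prod.ext this hq
      · intro hq
        refine ⟨_, ⟨q.2, rfl⟩, rfl, ?_⟩
        simp only [Set.mem_singleton_iff]
        intro h
        apply hq
        have : (f q.2, q.2) ∈ X := hf q.2
        rwa [← h] at this
  · choose f hf hf' using hX
    refine ⟨Set.range (fun i => {q : ZMod (k + 1) × ZMod (k + 1) | q.1 = i} \ {(i, f i)}),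
      ?_, ?_, ?_⟩
    · rintro L ⟨i, rfl⟩
      exact Or.inr ⟨i, (i, f i), rfl, rfl⟩
    · rintro L ⟨i, rfl⟩ M ⟨i', rfl⟩ hLM
      have hii' : i ≠ i' := by rintro rfl; exact hLM rfl
      refine Set.disjoint_left.2 ?_
      rintro q ⟨hq, _⟩ ⟨hq', _⟩
      exact hii' (hq ▸ hq')
    · ext q
      simp only [Set.mem_sUnion, Set.mem_range, Set.mem_compl_iff]
      constructor
      · rintro ⟨L, ⟨i, rfl⟩, hq, hq'⟩ hqX
        apply hq'
        have : q.2 = f i := hf' i q.2 (by show _ ∈ X; rw [← hq]; simpa using hqX)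
        simp only [Set.mem_singleton_iff]
        exact Prod.ext hq this
      · intro hq
        refine ⟨_, ⟨q.1, rfl⟩, rfl, ?_⟩
        simp only [Set.mem_singleton_iff]
        intro h
        apply hq
        have : (q.1, f q.1) ∈ X := hf q.1
        rwa [← h] at this
end

section
/- For every positive integer k, the set X₃ = {(x, y) ∈ ℤ² : y − x ≢ 0 (mod k+1)} (which equals ℤ² \ (S₁ ∪ S₂), i.e. ℤ² with every (k+1)-th diagonal removed) is a disjoint union of horizontal copies of T_k. -/
lemma dvd_small_eq_zero {a b : ℤ} (h : b ∣ a) (h2 : |a| < b) : a = 0 := by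
  by_contra ha
  exact absurd (Int.le_of_dvd (abs_pos.mpr ha) ((dvd_abs b a).mpr h)) (not_le.mpr h2)

/-- The set `X₃ = {(x, y) ∈ ℤ² : y - x ≢ 0 (mod k+1)}`, i.e. `ℤ²` with every
`(k+1)`-th diagonal removed, is a disjoint union of horizontal copies of `T_k`. -/
theorem X3_tiled_by_horizontal_copies (k : ℕ) (hk : 0 < k) :
    ∃ 𝒞 : Set (Set (ℤ × ℤ)),
      (∀ C ∈ 𝒞, ∃ p : ℤ × ℤ, C = (fun t : ℤ => (p.1 + t, p.2)) '' puncturedInterval k) ∧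
      𝒞.PairwiseDisjoint id ∧
      ⋃₀ 𝒞 = {p : ℤ × ℤ | ¬ ((k : ℤ) + 1 ∣ p.2 - p.1)} := by
  refine ⟨{C | ∃ c : ℤ × ℤ, (2*(k:ℤ)+2) ∣ c.2 - c.1 ∧
      C = (fun t : ℤ => (c.1 + t, c.2)) '' puncturedInterval k}, ?_, ?_, ?_⟩
  · rintro C ⟨c, -, rfl⟩; exact ⟨c, rfl⟩
  · rintro C₁ ⟨c, hc, rfl⟩ C₂ ⟨c', hc', rfl⟩ hne
    simp only [Function.onFun, id]
    rw [Set.disjoint_left]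
    rintro ⟨x, y⟩ ⟨t, ⟨ht0, ht1, ht2⟩, h1⟩ ⟨t', ⟨ht0', ht1', ht2'⟩, h2⟩
    have hx1 : c.1 + t = x := congrArg Prod.fst h1
    have hy1 : c.2 = y := congrArg Prod.snd h1
    have hx2 : c'.1 + t' = x := congrArg Prod.fst h2
    have hy2 : c'.2 = y := congrArg Prod.snd h2
    have hd : (2*(k:ℤ)+2) ∣ (c'.1 - c.1) := by
      have : c'.1 - c.1 = (c.2 - c.1) - (c'.2 - c'.1) := by omega
      rw [this]; exact dvd_sub hc hc'
    have h0 : c'.1 - c.1 = 0 := dvd_small_eq_zero hd (by rw [abs_lt]; omega)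
    exact hne (by
      have : c = c' := Prod.ext (by omega) (by omega)
      rw [this])
  · ext ⟨x, y⟩
    simp only [Set.mem_sUnion, Set.mem_setOf_eq]
    constructor
    · rintro ⟨C, ⟨c, hc, rfl⟩, t, ⟨ht0, ht1, ht2⟩, hpt⟩
      have hx : c.1 + t = x := congrArg Prod.fst hpt
      have hy : c.2 = y := congrArg Prod.snd hpt
      intro hdvd
      have h1 : ((k:ℤ)+1) ∣ c.2 - c.1 := dvd_trans ⟨2, by ring⟩ hc
      have h2 : ((k:ℤ)+1) ∣ t := by
        have ht : t = (c.2 - c.1) - (y - x) := by omega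
        rw [ht]; exact dvd_sub h1 hdvd
      exact ht0 (dvd_small_eq_zero h2 (by rw [abs_lt]; omega))
    · intro h
      set n := (y - x) % (2*(k:ℤ)+2) with hn
      have hn0 : 0 ≤ n := Int.emod_nonneg _ (by positivity)
      have hn1 : n < 2*(k:ℤ)+2 := Int.emod_lt_of_pos _ (by positivity)
      have hd : (2*(k:ℤ)+2) ∣ (y - x) - n := Int.dvd_self_sub_of_emod_eq rfl
      have hk1 : ¬ ((k:ℤ)+1) ∣ n := by
        intro hdn
        refine h ?_
        have heq : (y - x) = ((y-x) - n) + n := by ring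
        rw [heq]
        exact dvd_add (dvd_trans ⟨2, by ring⟩ hd) hdn
      have hne0 : n ≠ 0 := fun h0 => hk1 (h0 ▸ dvd_zero _)
      have hnek : n ≠ (k:ℤ)+1 := fun h0 => hk1 (h0 ▸ dvd_refl _)
      by_cases hle : n ≤ k
      · refine ⟨_, ⟨(x + n, y), by rw [show y - (x+n) = (y-x) - n from by ring]; exact hd, rfl⟩,
          -n, ⟨by omega, by omega, by omega⟩, by simp⟩
      · refine ⟨_, ⟨(x - (2*(k:ℤ)+2) + n, y), ?_, rfl⟩,
          2*(k:ℤ)+2 - n, ⟨by omega, by omega, by omega⟩, by simp only [Prod.mk.injEq, and_true]; ring⟩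
        have : y - (x - (2*(k:ℤ)+2) + n) = ((y - x) - n) + (2*(k:ℤ)+2) := by ring
        rw [this]
        exact dvd_add hd ⟨1, by ring⟩
end

section
/- Let k be a positive integer with k ≡ 4 (mod 8). Then the set X₁ = ℤ² \ (S₂ ∪ S₃) is a disjoint union of vertical copies of T_k. -/
/-- `S₂ = {(x, x + n(k+1)) : x - 2n ≡ 4, 5, 6 or 7 (mod 8)}`. -/
def S2 (k : ℕ) : Set (ℤ × ℤ) :=
  {p | ∃ x n : ℤ, p = (x, x + n * ((k : ℤ) + 1)) ∧
    (x - 2 * n) % 8 ∈ ({4, 5, 6, 7} : Set ℤ)}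

/-- `S₃ = {(x, x + n(k+1) + 1) : x - 2n ≡ 2, 3, 4 or 5 (mod 8)}`. -/
def S3 (k : ℕ) : Set (ℤ × ℤ) :=
  {p | ∃ x n : ℤ, p = (x, x + n * ((k : ℤ) + 1) + 1) ∧
    (x - 2 * n) % 8 ∈ ({2, 3, 4, 5} : Set ℤ)}

/-- Centers of the vertical tiles. -/
def tileCenters (k : ℕ) : Set (ℤ × ℤ) :=
  {p : ℤ × ℤ | ∃ x n : ℤ,
    (p = (x, x + n * ((k : ℤ) + 1)) ∧ ((x - 2 * n) % 8 = 6 ∨ (x - 2 * n) % 8 = 7)) ∨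
    (p = (x, x + n * ((k : ℤ) + 1) + 1) ∧ ((x - 2 * n) % 8 = 2 ∨ (x - 2 * n) % 8 = 3))}

lemma tile_c2_not_S2 (K x n n' t : ℤ) (hK : 1 ≤ K)
    (heq : x + n * (K + 1) + t = x + n' * (K + 1))
    (ht0 : t ≠ 0) (ht1 : -K ≤ t) (ht2 : t ≤ K) : False := by
  have h1 : (n' - n) * (K + 1) < 1 * (K + 1) := by nlinarith
  have h2 : (-1) * (K + 1) < (n' - n) * (K + 1) := by nlinarith
  have hb1 := lt_of_mul_lt_mul_right h1 (by linarith : (0:ℤ) ≤ K + 1)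
  have hb2 := lt_of_mul_lt_mul_right h2 (by linarith : (0:ℤ) ≤ K + 1)
  have hn : n' = n := by omega
  subst hn
  apply ht0; linarith

lemma tile_c2_not_S3 (K x n n' t : ℤ) (hK : 1 ≤ K)
    (heq : x + n * (K + 1) + t = x + n' * (K + 1) + 1)
    (hm : (x - 2 * n) % 8 = 6 ∨ (x - 2 * n) % 8 = 7)
    (hm' : (x - 2 * n') % 8 = 2 ∨ (x - 2 * n') % 8 = 3 ∨ (x - 2 * n') % 8 = 4 ∨
      (x - 2 * n') % 8 = 5)
    (ht1 : -K ≤ t) (ht2 : t ≤ K) : False := by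
  have h1 : (n' - n) * (K + 1) < 1 * (K + 1) := by nlinarith
  have h2 : (-2) * (K + 1) < (n' - n) * (K + 1) := by nlinarith
  have hb1 := lt_of_mul_lt_mul_right h1 (by linarith : (0:ℤ) ≤ K + 1)
  have hb2 := lt_of_mul_lt_mul_right h2 (by linarith : (0:ℤ) ≤ K + 1)
  omega

lemma tile_c3_not_S2 (K x n n' t : ℤ) (hK : 1 ≤ K)
    (heq : x + n * (K + 1) + 1 + t = x + n' * (K + 1))
    (hm : (x - 2 * n) % 8 = 2 ∨ (x - 2 * n) % 8 = 3)
    (hm' : (x - 2 * n') % 8 = 4 ∨ (x - 2 * n') % 8 = 5 ∨ (x - 2 * n') % 8 = 6 ∨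
      (x - 2 * n') % 8 = 7)
    (ht1 : -K ≤ t) (ht2 : t ≤ K) : False := by
  have h1 : (n' - n) * (K + 1) ≤ 1 * (K + 1) := by nlinarith
  have h2 : (-1) * (K + 1) < (n' - n) * (K + 1) := by nlinarith
  have hb1 := le_of_mul_le_mul_right h1 (by linarith : (0:ℤ) < K + 1)
  have hb2 := lt_of_mul_lt_mul_right h2 (by linarith : (0:ℤ) ≤ K + 1)
  omega

lemma tile_c3_not_S3 (K x n n' t : ℤ) (hK : 1 ≤ K)
    (heq : x + n * (K + 1) + 1 + t = x + n' * (K + 1) + 1)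
    (ht0 : t ≠ 0) (ht1 : -K ≤ t) (ht2 : t ≤ K) : False := by
  have h1 : (n' - n) * (K + 1) < 1 * (K + 1) := by nlinarith
  have h2 : (-1) * (K + 1) < (n' - n) * (K + 1) := by nlinarith
  have hb1 := lt_of_mul_lt_mul_right h1 (by linarith : (0:ℤ) ≤ K + 1)
  have hb2 := lt_of_mul_lt_mul_right h2 (by linarith : (0:ℤ) ≤ K + 1)
  have hn : n' = n := by omega
  subst hn
  apply ht0; linarith

lemma centers_close_eq (K x c c' : ℤ) (hK : 1 ≤ K)
    (h : (∃ n, c = x + n * (K + 1) ∧ ((x - 2 * n) % 8 = 6 ∨ (x - 2 * n) % 8 = 7)) ∨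
         (∃ n, c = x + n * (K + 1) + 1 ∧ ((x - 2 * n) % 8 = 2 ∨ (x - 2 * n) % 8 = 3)))
    (h' : (∃ n, c' = x + n * (K + 1) ∧ ((x - 2 * n) % 8 = 6 ∨ (x - 2 * n) % 8 = 7)) ∨
         (∃ n, c' = x + n * (K + 1) + 1 ∧ ((x - 2 * n) % 8 = 2 ∨ (x - 2 * n) % 8 = 3)))
    (hb1 : c - c' ≤ 2 * K) (hb2 : c' - c ≤ 2 * K) : c = c' := by
  rcases h with ⟨n, rfl, hm⟩ | ⟨n, rfl, hm⟩ <;>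
    rcases h' with ⟨n', rfl, hm'⟩ | ⟨n', rfl, hm'⟩
  · have h1 : (n - n') * (K + 1) < 2 * (K + 1) := by nlinarith
    have h2 : (-2) * (K + 1) < (n - n') * (K + 1) := by nlinarith
    have d1 := lt_of_mul_lt_mul_right h1 (by linarith : (0:ℤ) ≤ K + 1)
    have d2 := lt_of_mul_lt_mul_right h2 (by linarith : (0:ℤ) ≤ K + 1)
    have hn : n = n' := by omega
    rw [hn]
  · exfalso
    have h1 : (n - n') * (K + 1) < 2 * (K + 1) := by nlinarith
    have h2 : (-2) * (K + 1) < (n - n') * (K + 1) := by nlinarith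
    have d1 := lt_of_mul_lt_mul_right h1 (by linarith : (0:ℤ) ≤ K + 1)
    have d2 := lt_of_mul_lt_mul_right h2 (by linarith : (0:ℤ) ≤ K + 1)
    omega
  · exfalso
    have h1 : (n - n') * (K + 1) < 2 * (K + 1) := by nlinarith
    have h2 : (-2) * (K + 1) < (n - n') * (K + 1) := by nlinarith
    have d1 := lt_of_mul_lt_mul_right h1 (by linarith : (0:ℤ) ≤ K + 1)
    have d2 := lt_of_mul_lt_mul_right h2 (by linarith : (0:ℤ) ≤ K + 1)
    omega
  · have h1 : (n - n') * (K + 1) < 2 * (K + 1) := by nlinarith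
    have h2 : (-2) * (K + 1) < (n - n') * (K + 1) := by nlinarith
    have d1 := lt_of_mul_lt_mul_right h1 (by linarith : (0:ℤ) ≤ K + 1)
    have d2 := lt_of_mul_lt_mul_right h2 (by linarith : (0:ℤ) ≤ K + 1)
    have hn : n = n' := by omega
    rw [hn]

/-- For `k ≡ 4 (mod 8)`, the set `X₁ = ℤ² \ (S₂ ∪ S₃)` is a disjoint union of
vertical copies of `T_k`. -/
theorem X1_tiled_by_vertical_copies (k : ℕ) (hk : 0 < k) (hmod : k % 8 = 4) :
    ∃ 𝒞 : Set (Set (ℤ × ℤ)),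
      (∀ C ∈ 𝒞, ∃ p : ℤ × ℤ, C = (fun t : ℤ => (p.1, p.2 + t)) '' puncturedInterval k) ∧
      𝒞.PairwiseDisjoint id ∧
      ⋃₀ 𝒞 = (S2 k ∪ S3 k)ᶜ := by
  have hK : 1 ≤ (k : ℤ) := by exact_mod_cast hk
  refine ⟨(fun p : ℤ × ℤ => (fun t : ℤ => (p.1, p.2 + t)) '' puncturedInterval k) ''
      tileCenters k, ?_, ?_, ?_⟩
  · rintro C ⟨p, -, rfl⟩
    exact ⟨p, rfl⟩
  · -- pairwise disjoint
    have key : ∀ p ∈ tileCenters k, ∀ p' ∈ tileCenters k, p.1 = p'.1 →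
        p.2 - p'.2 ≤ 2 * (k : ℤ) → p'.2 - p.2 ≤ 2 * (k : ℤ) → p = p' := by
      rintro p ⟨x, n, hp⟩ p' ⟨x', n', hp'⟩ h1 h2 h3
      rcases hp with ⟨rfl, hm⟩ | ⟨rfl, hm⟩ <;>
        rcases hp' with ⟨rfl, hm'⟩ | ⟨rfl, hm'⟩ <;>
        simp only at h1 h2 h3 <;> subst h1 <;>
        rw [Prod.mk.injEq] <;> refine ⟨rfl, ?_⟩
      · exact centers_close_eq _ x _ _ hK (Or.inl ⟨n, rfl, hm⟩) (Or.inl ⟨n', rfl, hm'⟩) h2 h3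
      · exact centers_close_eq _ x _ _ hK (Or.inl ⟨n, rfl, hm⟩) (Or.inr ⟨n', rfl, hm'⟩) h2 h3
      · exact centers_close_eq _ x _ _ hK (Or.inr ⟨n, rfl, hm⟩) (Or.inl ⟨n', rfl, hm'⟩) h2 h3
      · exact centers_close_eq _ x _ _ hK (Or.inr ⟨n, rfl, hm⟩) (Or.inr ⟨n', rfl, hm'⟩) h2 h3
    intro C hC C' hC' hne
    obtain ⟨p, hp, rfl⟩ := hC
    obtain ⟨p', hp', rfl⟩ := hC'
    refine Set.disjoint_left.mpr ?_
    intro z hz hz'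
    obtain ⟨t, ht, rfl⟩ := hz
    obtain ⟨t', ht', hzz⟩ := hz'
    simp only [Prod.mk.injEq] at hzz
    obtain ⟨he1, he2⟩ := hzz
    obtain ⟨ht0, ht1, ht2⟩ := ht
    obtain ⟨ht0', ht1', ht2'⟩ := ht'
    have hpp : p' = p := key p' hp' p hp he1 (by omega) (by omega)
    exact hne (by rw [hpp])
  · apply Set.eq_of_subset_of_subset
    · -- every tile is inside the complement
      rintro z ⟨C, ⟨p, hp, rfl⟩, hzC⟩
      obtain ⟨t, ht, rfl⟩ := hzC
      obtain ⟨ht0, ht1, ht2⟩ := ht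
      obtain ⟨x, n, hcase⟩ := hp
      simp only [Set.mem_compl_iff, Set.mem_union, not_or]
      rcases hcase with ⟨rfl, hm⟩ | ⟨rfl, hm⟩ <;> simp only <;> constructor
      · rintro ⟨x', n', hpair, hmm⟩
        simp only [Prod.mk.injEq] at hpair
        obtain ⟨rfl, heq⟩ := hpair
        simp only [Set.mem_insert_iff, Set.mem_singleton_iff] at hmm
        exact tile_c2_not_S2 (k : ℤ) x n n' t hK heq ht0 ht1 ht2
      · rintro ⟨x', n', hpair, hmm⟩
        simp only [Prod.mk.injEq] at hpair
        obtain ⟨rfl, heq⟩ := hpair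
        simp only [Set.mem_insert_iff, Set.mem_singleton_iff] at hmm
        exact tile_c2_not_S3 (k : ℤ) x n n' t hK heq hm hmm ht1 ht2
      · rintro ⟨x', n', hpair, hmm⟩
        simp only [Prod.mk.injEq] at hpair
        obtain ⟨rfl, heq⟩ := hpair
        simp only [Set.mem_insert_iff, Set.mem_singleton_iff] at hmm
        exact tile_c3_not_S2 (k : ℤ) x n n' t hK heq hm hmm ht1 ht2
      · rintro ⟨x', n', hpair, hmm⟩
        simp only [Prod.mk.injEq] at hpair
        obtain ⟨rfl, heq⟩ := hpair
        simp only [Set.mem_insert_iff, Set.mem_singleton_iff] at hmm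
        exact tile_c3_not_S3 (k : ℤ) x n n' t hK heq ht0 ht1 ht2
    · -- coverage
      rintro ⟨x, y⟩ hz
      simp only [Set.mem_compl_iff, Set.mem_union, not_or] at hz
      obtain ⟨hy2, hy3⟩ := hz
      set q : ℤ := (k : ℤ) + 1 with hq
      have hq0 : (0:ℤ) < q := by omega
      set n' : ℤ := (y - x) / q with hn'
      have h0 := Int.mul_ediv_add_emod (y - x) q
      have hr1 := Int.emod_nonneg (y - x) (by omega : q ≠ 0)
      have hr2 := Int.emod_lt_of_pos (y - x) hq0
      have hB1 : n' * q ≤ y - x := by rw [hn']; linarith [mul_comm ((y - x) / q) q]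
      have hB2 : y - x < n' * q + q := by rw [hn']; linarith [mul_comm ((y - x) / q) q]
      clear h0 hr1 hr2
      have h8 : (x - 2 * n') % 8 = 0 ∨ (x - 2 * n') % 8 = 1 ∨ (x - 2 * n') % 8 = 2 ∨
          (x - 2 * n') % 8 = 3 ∨ (x - 2 * n') % 8 = 4 ∨ (x - 2 * n') % 8 = 5 ∨
          (x - 2 * n') % 8 = 6 ∨ (x - 2 * n') % 8 = 7 := by omega
      have hex : ∃ n₀ : ℤ, ((x - 2 * n₀) % 8 = 6 ∨ (x - 2 * n₀) % 8 = 7) ∧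
          n₀ * q ≤ y - x ∧ y - x < n₀ * q + 4 * q := by
        rcases h8 with h | h | h | h | h | h | h | h
        · exact ⟨n' - 3, by omega, by nlinarith, by nlinarith⟩
        · exact ⟨n' - 3, by omega, by nlinarith, by nlinarith⟩
        · exact ⟨n' - 2, by omega, by nlinarith, by nlinarith⟩
        · exact ⟨n' - 2, by omega, by nlinarith, by nlinarith⟩
        · exact ⟨n' - 1, by omega, by nlinarith, by nlinarith⟩
        · exact ⟨n' - 1, by omega, by nlinarith, by nlinarith⟩
        · exact ⟨n', by omega, by nlinarith, by nlinarith⟩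
        · exact ⟨n', by omega, by nlinarith, by nlinarith⟩
      obtain ⟨n₀, hm0, hd1, hd2⟩ := hex
      obtain ⟨A, hA⟩ : ∃ A : ℤ, A = n₀ * q := ⟨_, rfl⟩
      rw [← hA] at hd1 hd2
      have e1 : (n₀ + 1) * q = A + q := by rw [hA]; ring
      have e2 : (n₀ + 2) * q = A + 2 * q := by rw [hA]; ring
      have e4 : (n₀ + 4) * q = A + 4 * q := by rw [hA]; ring
      have h1 : y ≠ x + A := by
        intro h
        refine hy2 ⟨x, n₀, ?_, ?_⟩
        · rw [Prod.mk.injEq]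
          exact ⟨rfl, by rw [← hq, ← hA]; omega⟩
        · simp only [Set.mem_insert_iff, Set.mem_singleton_iff]; omega
      have h2 : y ≠ x + A + q := by
        intro h
        refine hy2 ⟨x, n₀ + 1, ?_, ?_⟩
        · rw [Prod.mk.injEq]
          exact ⟨rfl, by rw [← hq, e1]; omega⟩
        · simp only [Set.mem_insert_iff, Set.mem_singleton_iff]; omega
      have h3 : y ≠ x + A + q + 1 := by
        intro h
        refine hy3 ⟨x, n₀ + 1, ?_, ?_⟩
        · rw [Prod.mk.injEq]
          exact ⟨rfl, by rw [← hq, e1]; omega⟩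
        · simp only [Set.mem_insert_iff, Set.mem_singleton_iff]; omega
      have h4 : y ≠ x + A + 2 * q + 1 := by
        intro h
        refine hy3 ⟨x, n₀ + 2, ?_, ?_⟩
        · rw [Prod.mk.injEq]
          exact ⟨rfl, by rw [← hq, e2]; omega⟩
        · simp only [Set.mem_insert_iff, Set.mem_singleton_iff]; omega
      have hsplit : (x + A + 1 ≤ y ∧ y ≤ x + A + q - 1) ∨
          (x + A + q + 2 ≤ y ∧ y ≤ x + A + 3 * q ∧ y ≠ x + A + 2 * q + 1) ∨
          (x + A + 3 * q + 1 ≤ y ∧ y ≤ x + A + 4 * q - 1) := by omega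
      rcases hsplit with ⟨ha, hb⟩ | ⟨ha, hb, hc⟩ | ⟨ha, hb⟩
      · refine Set.mem_sUnion.mpr ⟨_, ⟨(x, x + A), ⟨x, n₀, Or.inl ⟨?_, hm0⟩⟩, rfl⟩, ?_⟩
        · rw [Prod.mk.injEq]
          exact ⟨rfl, by rw [← hq, ← hA]⟩
        · refine ⟨y - (x + A), ⟨by omega, by omega, by omega⟩, ?_⟩
          simp only [Prod.mk.injEq]
          exact ⟨trivial, by ring⟩
      · refine Set.mem_sUnion.mpr
          ⟨_, ⟨(x, x + A + 2 * q + 1), ⟨x, n₀ + 2, Or.inr ⟨?_, by omega⟩⟩, rfl⟩, ?_⟩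
        · rw [Prod.mk.injEq]
          exact ⟨rfl, by rw [← hq, e2]; ring⟩
        · refine ⟨y - (x + A + 2 * q + 1), ⟨by omega, by omega, by omega⟩, ?_⟩
          simp only [Prod.mk.injEq]
          exact ⟨trivial, by ring⟩
      · refine Set.mem_sUnion.mpr
          ⟨_, ⟨(x, x + A + 4 * q), ⟨x, n₀ + 4, Or.inl ⟨?_, by omega⟩⟩, rfl⟩, ?_⟩
        · rw [Prod.mk.injEq]
          exact ⟨rfl, by rw [← hq, e4]; ring⟩
        · refine ⟨y - (x + A + 4 * q), ⟨by omega, by omega, by omega⟩, ?_⟩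
          simp only [Prod.mk.injEq]
          exact ⟨trivial, by ring⟩
end

section
/- Let k be a positive integer with k ≡ 4 (mod 8). Then the set X₂ = ℤ² \ (S₁ ∪ S₃) is a disjoint union of horizontal copies of T_k. -/
/-- `S₁ = {(x, x + n(k+1)) : x - 2n ≡ 0, 1, 2 or 3 (mod 8)}`. -/
def S1 (k : ℕ) : Set (ℤ × ℤ) :=
  {p | ∃ x n : ℤ, p = (x, x + n * ((k : ℤ) + 1)) ∧
    (x - 2 * n) % 8 ∈ ({0, 1, 2, 3} : Set ℤ)}

/-- Centers of the copies of `T_k` used in the tiling. -/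
def centers (k : ℕ) : Set (ℤ × ℤ) :=
  {c | ∃ n e : ℤ, c.1 = c.2 - n * ((k : ℤ) + 1) - e ∧
    ((e = 0 ∧ ((c.2 + n) % 8 = 0 ∨ (c.2 + n) % 8 = 2)) ∨
     (e = 1 ∧ ((c.2 + n) % 8 = 4 ∨ (c.2 + n) % 8 = 6)))}

lemma aux_small (k : ℕ) (D : ℤ) (h1 : -(2 * (k:ℤ) + 2) < D * ((k:ℤ) + 1))
    (h2 : D * ((k:ℤ) + 1) < 2 * (k:ℤ) + 2) : D = -1 ∨ D = 0 ∨ D = 1 := by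
  have hk1 : (0:ℤ) ≤ (k:ℤ) + 1 := by positivity
  have h3 : D ≤ 1 := by
    by_contra h
    push_neg at h
    have h' : (2:ℤ) ≤ D := h
    have := mul_le_mul_of_nonneg_right h' hk1
    linarith
  have h4 : -1 ≤ D := by
    by_contra h
    push_neg at h
    have h' : D ≤ -2 := by omega
    have := mul_le_mul_of_nonneg_right h' hk1
    linarith
  omega

lemma copy_avoid (k : ℕ) (j : ℤ) (hKj : (k:ℤ) = 8 * j + 4)
    (c : ℤ × ℤ) (hc : c ∈ centers k) (t : ℤ) (ht : t ∈ puncturedInterval k) :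
    (c.1 + t, c.2) ∉ S1 k ∪ S3 k := by
  obtain ⟨n, e, hce, hdisj⟩ := hc
  obtain ⟨ht0, htl, htr⟩ := ht
  rintro (⟨x', n', hpe, hm'⟩ | ⟨x', n', hpe, hm'⟩) <;>
    obtain ⟨hx', hy⟩ := Prod.ext_iff.mp hpe
  · -- S1 case
    simp only at hx' hy
    have hE : (n - n') * ((k:ℤ) + 1) = t - e + 0 := by
      linear_combination hce - hx' + hy
    obtain ⟨M, hM⟩ : ∃ M : ℤ, x' - 2 * n' = c.2 + n' - 8 * M :=
      ⟨n' * (j + 1), by linear_combination -hy - n' * hKj⟩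
    simp only [Set.mem_insert_iff, Set.mem_singleton_iff] at hm'
    rcases hdisj with ⟨he, hm⟩ | ⟨he, hm⟩ <;> subst he <;>
      have hD := aux_small k (n - n') (by rw [hE]; omega) (by rw [hE]; omega) <;>
      rcases hD with h | h | h <;> rw [h] at hE <;> omega
  · -- S3 case
    simp only at hx' hy
    have hE : (n - n') * ((k:ℤ) + 1) = t - e + 1 := by
      linear_combination hce - hx' + hy
    obtain ⟨M, hM⟩ : ∃ M : ℤ, x' - 2 * n' = c.2 + n' - 1 - 8 * M :=
      ⟨n' * (j + 1), by linear_combination -hy - n' * hKj⟩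
    simp only [Set.mem_insert_iff, Set.mem_singleton_iff] at hm'
    rcases hdisj with ⟨he, hm⟩ | ⟨he, hm⟩ <;> subst he <;>
      have hD := aux_small k (n - n') (by rw [hE]; omega) (by rw [hE]; omega) <;>
      rcases hD with h | h | h <;> rw [h] at hE <;> omega

lemma center_unique (k : ℕ) (c c' : ℤ × ℤ) (hc : c ∈ centers k) (hc' : c' ∈ centers k)
    (t t' : ℤ) (ht : t ∈ puncturedInterval k) (ht' : t' ∈ puncturedInterval k)
    (heq : (c.1 + t, c.2) = (c'.1 + t', c'.2)) : c = c' := by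
  obtain ⟨n, e, hce, hd⟩ := hc
  obtain ⟨n', e', hce', hd'⟩ := hc'
  obtain ⟨h1, h2⟩ := Prod.ext_iff.mp heq
  simp only at h1 h2
  obtain ⟨ht0, htl, htr⟩ := ht
  obtain ⟨ht0', htl', htr'⟩ := ht'
  have hE : (n' - n) * ((k:ℤ) + 1) = e - e' + t' - t := by
    linear_combination hce' - hce + h1 - h2
  rcases hd with ⟨he, hm⟩ | ⟨he, hm⟩ <;> rcases hd' with ⟨he', hm'⟩ | ⟨he', hm'⟩ <;>
      subst he <;> subst he' <;>
      have hD := aux_small k (n' - n) (by rw [hE]; omega) (by rw [hE]; omega)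
  · rcases hD with h | h | h
    · omega
    · have hnn : n' = n := by omega
      have hfst : c.1 = c'.1 := by rw [hce, hce', h2, hnn]
      exact Prod.ext_iff.mpr ⟨hfst, h2⟩
    · omega
  · rcases hD with h | h | h <;> omega
  · rcases hD with h | h | h <;> omega
  · rcases hD with h | h | h
    · omega
    · have hnn : n' = n := by omega
      have hfst : c.1 = c'.1 := by rw [hce, hce', h2, hnn]
      exact Prod.ext_iff.mpr ⟨hfst, h2⟩
    · omega

lemma cover (k : ℕ) (j : ℤ) (hk : 0 < k) (hKj : (k:ℤ) = 8 * j + 4) (p : ℤ × ℤ)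
    (hp : p ∉ S1 k ∪ S3 k) :
    ∃ c ∈ centers k, ∃ t ∈ puncturedInterval k, p = (c.1 + t, c.2) := by
  obtain ⟨x, y⟩ := p
  simp only [Set.mem_union, not_or] at hp
  obtain ⟨hp1, hp3⟩ := hp
  have hKpos : (0:ℤ) < (k:ℤ) + 1 := by positivity
  set n := (y - x) / ((k:ℤ) + 1) with hn
  set r := (y - x) % ((k:ℤ) + 1) with hr
  have hdm : ((k:ℤ) + 1) * n + r = y - x := Int.mul_ediv_add_emod _ _
  have hr0 : 0 ≤ r := Int.emod_nonneg _ (by positivity)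
  have hr1 : r < (k:ℤ) + 1 := Int.emod_lt_of_pos _ hKpos
  have hS1 : ¬ (r = 0 ∧ ((y + n) % 8 = 0 ∨ (y + n) % 8 = 1 ∨ (y + n) % 8 = 2 ∨
      (y + n) % 8 = 3)) := by
    rintro ⟨hre, hm⟩
    apply hp1
    refine ⟨x, n, ?_, ?_⟩
    · simp only [Prod.mk.injEq]
      exact ⟨trivial, by linear_combination hre - hdm⟩
    · obtain ⟨M, hM⟩ : ∃ M : ℤ, x - 2 * n = y + n - 8 * M :=
        ⟨n * (j + 1), by linear_combination hdm - hre - n * hKj⟩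
      simp only [Set.mem_insert_iff, Set.mem_singleton_iff]
      omega
  have hS3 : ¬ (r = 1 ∧ ((y + n) % 8 = 3 ∨ (y + n) % 8 = 4 ∨ (y + n) % 8 = 5 ∨
      (y + n) % 8 = 6)) := by
    rintro ⟨hre, hm⟩
    apply hp3
    refine ⟨x, n, ?_, ?_⟩
    · simp only [Prod.mk.injEq]
      exact ⟨trivial, by linear_combination hre - hdm⟩
    · obtain ⟨M, hM⟩ : ∃ M : ℤ, x - 2 * n = y + n - 1 - 8 * M :=
        ⟨n * (j + 1), by linear_combination hdm - hre - n * hKj⟩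
      simp only [Set.mem_insert_iff, Set.mem_singleton_iff]
      omega
  have hmc : (y + n) % 8 = 0 ∨ (y + n) % 8 = 1 ∨ (y + n) % 8 = 2 ∨ (y + n) % 8 = 3 ∨
      (y + n) % 8 = 4 ∨ (y + n) % 8 = 5 ∨ (y + n) % 8 = 6 ∨ (y + n) % 8 = 7 := by omega
  rcases hmc with hm | hm | hm | hm | hm | hm | hm | hm
  · -- m = 0 : center (n, 0), t = -r
    refine ⟨(y - n * ((k:ℤ) + 1) - 0, y), ⟨n, 0, rfl, Or.inl ⟨rfl, Or.inl hm⟩⟩,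
      -r, ⟨by omega, by omega, by omega⟩, ?_⟩
    simp only [Prod.mk.injEq]
    exact ⟨by linear_combination hdm, trivial⟩
  · -- m = 1 : center (n+1, 0), t = k+1-r
    refine ⟨(y - (n + 1) * ((k:ℤ) + 1) - 0, y), ⟨n + 1, 0, rfl, Or.inl ⟨rfl, Or.inr (by omega)⟩⟩,
      (k:ℤ) + 1 - r, ⟨by omega, by omega, by omega⟩, ?_⟩
    simp only [Prod.mk.injEq]
    exact ⟨by linear_combination hdm, trivial⟩
  · -- m = 2 : center (n, 0), t = -r
    refine ⟨(y - n * ((k:ℤ) + 1) - 0, y), ⟨n, 0, rfl, Or.inl ⟨rfl, Or.inr hm⟩⟩,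
      -r, ⟨by omega, by omega, by omega⟩, ?_⟩
    simp only [Prod.mk.injEq]
    exact ⟨by linear_combination hdm, trivial⟩
  · -- m = 3 : center (n+1, 1), t = k+2-r, r ≥ 2
    refine ⟨(y - (n + 1) * ((k:ℤ) + 1) - 1, y), ⟨n + 1, 1, rfl, Or.inr ⟨rfl, Or.inl (by omega)⟩⟩,
      (k:ℤ) + 2 - r, ⟨by omega, by omega, by omega⟩, ?_⟩
    simp only [Prod.mk.injEq]
    exact ⟨by linear_combination hdm, trivial⟩
  · -- m = 4
    rcases (show r = 0 ∨ 2 ≤ r by omega) with hre | hre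
    · -- r = 0 : center (n, 1), t = 1
      refine ⟨(y - n * ((k:ℤ) + 1) - 1, y), ⟨n, 1, rfl, Or.inr ⟨rfl, Or.inl hm⟩⟩,
        1, ⟨by omega, by omega, by omega⟩, ?_⟩
      simp only [Prod.mk.injEq]
      exact ⟨by linear_combination hdm - hre, trivial⟩
    · -- r ≥ 2 : center (n, 1), t = 1 - r
      refine ⟨(y - n * ((k:ℤ) + 1) - 1, y), ⟨n, 1, rfl, Or.inr ⟨rfl, Or.inl hm⟩⟩,
        1 - r, ⟨by omega, by omega, by omega⟩, ?_⟩
      simp only [Prod.mk.injEq]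
      exact ⟨by linear_combination hdm, trivial⟩
  · -- m = 5
    rcases (show r = 0 ∨ 2 ≤ r by omega) with hre | hre
    · -- r = 0 : center (n-1, 1), t = -k
      refine ⟨(y - (n - 1) * ((k:ℤ) + 1) - 1, y), ⟨n - 1, 1, rfl, Or.inr ⟨rfl, Or.inl (by omega)⟩⟩,
        -(k:ℤ), ⟨by omega, by omega, by omega⟩, ?_⟩
      simp only [Prod.mk.injEq]
      exact ⟨by linear_combination hdm - hre, trivial⟩
    · -- r ≥ 2 : center (n+1, 1), t = k+2-r
      refine ⟨(y - (n + 1) * ((k:ℤ) + 1) - 1, y), ⟨n + 1, 1, rfl, Or.inr ⟨rfl, Or.inr (by omega)⟩⟩,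
        (k:ℤ) + 2 - r, ⟨by omega, by omega, by omega⟩, ?_⟩
      simp only [Prod.mk.injEq]
      exact ⟨by linear_combination hdm, trivial⟩
  · -- m = 6
    rcases (show r = 0 ∨ 2 ≤ r by omega) with hre | hre
    · -- r = 0 : center (n, 1), t = 1
      refine ⟨(y - n * ((k:ℤ) + 1) - 1, y), ⟨n, 1, rfl, Or.inr ⟨rfl, Or.inr hm⟩⟩,
        1, ⟨by omega, by omega, by omega⟩, ?_⟩
      simp only [Prod.mk.injEq]
      exact ⟨by linear_combination hdm - hre, trivial⟩
    · -- r ≥ 2 : center (n, 1), t = 1 - r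
      refine ⟨(y - n * ((k:ℤ) + 1) - 1, y), ⟨n, 1, rfl, Or.inr ⟨rfl, Or.inr hm⟩⟩,
        1 - r, ⟨by omega, by omega, by omega⟩, ?_⟩
      simp only [Prod.mk.injEq]
      exact ⟨by linear_combination hdm, trivial⟩
  · -- m = 7
    rcases (show r = 0 ∨ 1 ≤ r by omega) with hre | hre
    · -- r = 0 : center (n-1, 1), t = -k
      refine ⟨(y - (n - 1) * ((k:ℤ) + 1) - 1, y), ⟨n - 1, 1, rfl, Or.inr ⟨rfl, Or.inr (by omega)⟩⟩,
        -(k:ℤ), ⟨by omega, by omega, by omega⟩, ?_⟩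
      simp only [Prod.mk.injEq]
      exact ⟨by linear_combination hdm - hre, trivial⟩
    · -- r ≥ 1 : center (n+1, 0), t = k+1-r
      refine ⟨(y - (n + 1) * ((k:ℤ) + 1) - 0, y), ⟨n + 1, 0, rfl, Or.inl ⟨rfl, Or.inl (by omega)⟩⟩,
        (k:ℤ) + 1 - r, ⟨by omega, by omega, by omega⟩, ?_⟩
      simp only [Prod.mk.injEq]
      exact ⟨by linear_combination hdm, trivial⟩

/-- For `k ≡ 4 (mod 8)`, the set `X₂ = ℤ² \ (S₁ ∪ S₃)` is a disjoint union of
horizontal copies of `T_k`. -/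
theorem X2_tiled_by_horizontal_copies (k : ℕ) (hk : 0 < k) (hmod : k % 8 = 4) :
    ∃ 𝒞 : Set (Set (ℤ × ℤ)),
      (∀ C ∈ 𝒞, ∃ p : ℤ × ℤ, C = (fun t : ℤ => (p.1 + t, p.2)) '' puncturedInterval k) ∧
      𝒞.PairwiseDisjoint id ∧
      ⋃₀ 𝒞 = (S1 k ∪ S3 k)ᶜ := by
  obtain ⟨j, hKj⟩ : ∃ j : ℤ, (k:ℤ) = 8 * j + 4 := ⟨((k:ℤ) - 4) / 8, by omega⟩
  refine ⟨(fun c : ℤ × ℤ => (fun t : ℤ => (c.1 + t, c.2)) '' puncturedInterval k) '' centers k,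
    ?_, ?_, ?_⟩
  · rintro C ⟨c, hc, rfl⟩
    exact ⟨c, rfl⟩
  · rintro A ⟨c, hc, rfl⟩ B ⟨c', hc', rfl⟩ hne
    simp only [Function.onFun, id_eq]
    rw [Set.disjoint_left]
    rintro p ⟨t, ht, rfl⟩ ⟨t', ht', hpe⟩
    exact hne (by rw [center_unique k c c' hc hc' t t' ht ht' hpe.symm])
  · ext p
    simp only [Set.mem_sUnion, Set.mem_image, Set.mem_compl_iff]
    constructor
    · rintro ⟨A, ⟨c, hc, rfl⟩, t, ht, rfl⟩
      exact copy_avoid k j hKj c hc t ht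
    · intro hp
      obtain ⟨c, hc, t, ht, hpe⟩ := cover k j hk hKj p hp
      exact ⟨_, ⟨c, hc, rfl⟩, t, ht, hpe.symm⟩
end

section
/- Let k be a positive integer with k ≡ 4 (mod 8). Then the set X₂ = ℤ² \ (S₁ ∪ S₃) is invariant under translation by the vector (k+2, 1), i.e. (x, y) ∈ X₂ if and only if (x+k+2, y+1) ∈ X₂. -/
/-- For `k ≡ 4 (mod 8)`, the set `X₂ = ℤ² \ (S₁ ∪ S₃)` is invariant under
translation by `(k+2, 1)`. -/
theorem X2_translation_invariant (k : ℕ) (hk : 0 < k) (hmod : k % 8 = 4) (x y : ℤ) :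
    (x, y) ∈ (S1 k ∪ S3 k)ᶜ ↔ (x + (k : ℤ) + 2, y + 1) ∈ (S1 k ∪ S3 k)ᶜ := by
  obtain ⟨q, hq⟩ : ∃ q : ℤ, (k : ℤ) = 8 * q + 4 := ⟨(k / 8 : ℕ), by omega⟩
  have hS1 : (x, y) ∈ S1 k ↔ (x + (k : ℤ) + 2, y + 1) ∈ S1 k := by
    simp only [S1, Set.mem_setOf_eq, Prod.mk.injEq, Set.mem_insert_iff,
      Set.mem_singleton_iff]
    constructor
    · rintro ⟨x', n, ⟨rfl, rfl⟩, hc⟩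
      exact ⟨x + (k : ℤ) + 2, n - 1, ⟨rfl, by ring⟩, by omega⟩
    · rintro ⟨x', n, ⟨hx, hy⟩, hc⟩
      exact ⟨x, n + 1, ⟨rfl, by linear_combination hy - hx⟩, by omega⟩
  have hS3 : (x, y) ∈ S3 k ↔ (x + (k : ℤ) + 2, y + 1) ∈ S3 k := by
    simp only [S3, Set.mem_setOf_eq, Prod.mk.injEq, Set.mem_insert_iff,
      Set.mem_singleton_iff]
    constructor
    · rintro ⟨x', n, ⟨rfl, rfl⟩, hc⟩
      exact ⟨x + (k : ℤ) + 2, n - 1, ⟨rfl, by ring⟩, by omega⟩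
    · rintro ⟨x', n, ⟨hx, hy⟩, hc⟩
      exact ⟨x, n + 1, ⟨rfl, by linear_combination hy - hx⟩, by omega⟩
  rw [Set.mem_compl_iff, Set.mem_compl_iff, Set.mem_union, Set.mem_union, hS1, hS3]
end

section
/- For every positive integer k, the set {x ∈ ℤ : x mod 8(k+1) ∉ {0, 2(k+1)−1, 3(k+1)−1, 4(k+1)−1, 5(k+1)−1, 5(k+1), 6(k+1), 7(k+1)}} is a disjoint union of translates of T_k; explicitly, it is the disjoint union of the translates of T_k centred at the points congruent to 2(k+1)−1, 4(k+1)−1, 6(k+1) and 8(k+1) modulo 8(k+1). -/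
/-- The set of integers `x` with
`x mod 8(k+1) ∉ {0, 2(k+1)-1, 3(k+1)-1, 4(k+1)-1, 5(k+1)-1, 5(k+1), 6(k+1), 7(k+1)}`
is the disjoint union of the translates of `T_k` centred at the points congruent to
`2(k+1)-1`, `4(k+1)-1`, `6(k+1)` and `8(k+1)` modulo `8(k+1)`. -/
theorem row_tiling (k : ℕ) (hk : 0 < k) :
    ({a : ℤ | a % (8 * ((k : ℤ) + 1)) = 2 * ((k : ℤ) + 1) - 1 ∨
        a % (8 * ((k : ℤ) + 1)) = 4 * ((k : ℤ) + 1) - 1 ∨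
        a % (8 * ((k : ℤ) + 1)) = 6 * ((k : ℤ) + 1) ∨
        a % (8 * ((k : ℤ) + 1)) = 8 * ((k : ℤ) + 1) % (8 * ((k : ℤ) + 1))}).PairwiseDisjoint
      (fun a : ℤ => (fun t : ℤ => a + t) '' puncturedInterval k) ∧
    ⋃ a ∈ {a : ℤ | a % (8 * ((k : ℤ) + 1)) = 2 * ((k : ℤ) + 1) - 1 ∨
        a % (8 * ((k : ℤ) + 1)) = 4 * ((k : ℤ) + 1) - 1 ∨
        a % (8 * ((k : ℤ) + 1)) = 6 * ((k : ℤ) + 1) ∨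
        a % (8 * ((k : ℤ) + 1)) = 8 * ((k : ℤ) + 1) % (8 * ((k : ℤ) + 1))},
      (fun t : ℤ => a + t) '' puncturedInterval k =
    {x : ℤ | x % (8 * ((k : ℤ) + 1)) ∉
      ({0, 2 * ((k : ℤ) + 1) - 1, 3 * ((k : ℤ) + 1) - 1, 4 * ((k : ℤ) + 1) - 1,
        5 * ((k : ℤ) + 1) - 1, 5 * ((k : ℤ) + 1), 6 * ((k : ℤ) + 1),
        7 * ((k : ℤ) + 1)} : Set ℤ)} := by
  have hk1 : (1:ℤ) ≤ (k:ℤ) := by exact_mod_cast hk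
  set M : ℤ := 8 * ((k : ℤ) + 1) with hM
  have hMpos : (0:ℤ) < M := by omega
  simp only [Int.emod_self]
  constructor
  · intro a ha b hb hab
    simp only [Set.mem_setOf_eq, Int.emod_self] at ha hb
    simp only [Function.onFun]
    rw [Set.disjoint_left]
    rintro x ⟨t, ⟨ht0, ht1, ht2⟩, hxt⟩ ⟨s, ⟨hs0, hs1, hs2⟩, hxs⟩
    have hda : M * (a / M) + a % M = a := Int.mul_ediv_add_emod a M
    have hdb : M * (b / M) + b % M = b := Int.mul_ediv_add_emod b M
    obtain ⟨ra, hra, hda⟩ : ∃ ra, (ra = 2 * ((k:ℤ) + 1) - 1 ∨ ra = 4 * ((k:ℤ) + 1) - 1 ∨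
        ra = 6 * ((k:ℤ) + 1) ∨ ra = 0) ∧ M * (a / M) + ra = a := ⟨a % M, ha, hda⟩
    obtain ⟨rb, hrb, hdb⟩ : ∃ rb, (rb = 2 * ((k:ℤ) + 1) - 1 ∨ rb = 4 * ((k:ℤ) + 1) - 1 ∨
        rb = 6 * ((k:ℤ) + 1) ∨ rb = 0) ∧ M * (b / M) + rb = b := ⟨b % M, hb, hdb⟩
    obtain ⟨D, hMD⟩ : ∃ D, M * D = (a - b) - (ra - rb) :=
      ⟨a / M - b / M, by linear_combination hda - hdb⟩
    have hxt' : a + t = x := hxt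
    have hxs' : b + s = x := hxs
    have hab2 : a - b = s - t := by omega
    have hbd1 : M * D < M * 2 := by rw [hMD, hab2]; rw [hM]; omega
    have hbd2 : M * (-2) < M * D := by rw [hMD, hab2]; rw [hM]; omega
    have hD1 : D < 2 := lt_of_mul_lt_mul_left hbd1 hMpos.le
    have hD2 : -2 < D := lt_of_mul_lt_mul_left hbd2 hMpos.le
    interval_cases D <;> omega
  · ext x
    simp only [Set.mem_iUnion, Set.mem_image, Set.mem_setOf_eq, puncturedInterval,
      Set.mem_insert_iff, Set.mem_singleton_iff]
    constructor
    · rintro ⟨a, ha, t, ⟨ht0, ht1, ht2⟩, rfl⟩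
      have hxr : (a + t) % M = (a % M + t) % M := by
        conv_lhs => rw [show a + t = (a % M + t) + M * (a / M) by
          linarith [Int.mul_ediv_add_emod a M]]
        rw [Int.add_mul_emod_self_left]
      rcases ha with ha | ha | ha | ha
      · rw [ha] at hxr
        rw [hxr, Int.emod_eq_of_lt (by omega) (by omega)]
        omega
      · rw [ha] at hxr
        rw [hxr, Int.emod_eq_of_lt (by omega) (by omega)]
        omega
      · rw [ha] at hxr
        rw [hxr, Int.emod_eq_of_lt (by omega) (by omega)]
        omega
      · rcases lt_or_gt_of_ne ht0 with h | h
        · have h2 : ((0:ℤ) + t) % M = t + M := by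
            rw [show (0:ℤ) + t = (t + M) + M * (-1) by ring, Int.add_mul_emod_self_left]
            exact Int.emod_eq_of_lt (by omega) (by omega)
          rw [ha, h2] at hxr
          rw [hxr]; omega
        · have h2 : ((0:ℤ) + t) % M = t := by
            rw [zero_add]; exact Int.emod_eq_of_lt (by omega) (by omega)
          rw [ha, h2] at hxr
          rw [hxr]; omega
    · intro hx
      push_neg at hx
      obtain ⟨h0, h1, h2, h3, h4, h5, h6, h7⟩ := hx
      have hr0 : 0 ≤ x % M := Int.emod_nonneg x (by omega)
      have hrM : x % M < M := Int.emod_lt_of_pos x hMpos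
      have hxd : x % M + M * (x / M) = x := by linarith [Int.mul_ediv_add_emod x M]
      set r := x % M with hr
      set q := x / M with hq
      have hcov : (1 ≤ r ∧ r ≤ (k:ℤ)) ∨
          ((k:ℤ)+1 ≤ r ∧ r ≤ 3*((k:ℤ)+1)-2) ∨
          (3*((k:ℤ)+1) ≤ r ∧ r ≤ 5*((k:ℤ)+1)-2) ∨
          (5*((k:ℤ)+1)+1 ≤ r ∧ r ≤ 7*((k:ℤ)+1)-1) ∨
          (7*((k:ℤ)+1)+1 ≤ r ∧ r ≤ 8*((k:ℤ)+1)-1) := by omega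
      rcases hcov with hc | hc | hc | hc | hc
      · exact ⟨M * q, Or.inr (Or.inr (Or.inr (Int.mul_emod_right M q))), r,
          ⟨by omega, by omega, by omega⟩, by linear_combination hxd⟩
      · exact ⟨2*((k:ℤ)+1) - 1 + M * q,
          Or.inl (by rw [Int.add_mul_emod_self_left]; exact Int.emod_eq_of_lt (by omega) (by omega)),
          r - (2*((k:ℤ)+1) - 1), ⟨by omega, by omega, by omega⟩, by linear_combination hxd⟩
      · exact ⟨4*((k:ℤ)+1) - 1 + M * q,
          Or.inr (Or.inl (by rw [Int.add_mul_emod_self_left]; exact Int.emod_eq_of_lt (by omega) (by omega))),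
          r - (4*((k:ℤ)+1) - 1), ⟨by omega, by omega, by omega⟩, by linear_combination hxd⟩
      · exact ⟨6*((k:ℤ)+1) + M * q,
          Or.inr (Or.inr (Or.inl (by rw [Int.add_mul_emod_self_left]; exact Int.emod_eq_of_lt (by omega) (by omega)))),
          r - 6*((k:ℤ)+1), ⟨by omega, by omega, by omega⟩, by linear_combination hxd⟩
      · exact ⟨M * (q + 1), Or.inr (Or.inr (Or.inr (Int.mul_emod_right M (q+1)))), r - M,
          ⟨by omega, by omega, by omega⟩, by linear_combination hxd⟩
end

section
/- For every integer k ≥ 2 and every d ≥ 1, ℤ^d cannot be partitioned into pairwise disjoint k-strings. (Indeed, every k-string intersects the box {1, …, k+1}^d in either 0 or exactly k points, and (k+1)^d is not divisible by k.) -/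
/-- A `k`-string in `ℤ^d`: a coordinate line with every `(k+1)`-th point removed,
i.e. `{a + t·e_i : t ∈ ℤ, t ≢ r (mod k+1)}`. -/
def IsKString (k : ℕ) {d : ℕ} (L : Set (Fin d → ℤ)) : Prop :=
  ∃ (a : Fin d → ℤ) (i : Fin d) (r : ℤ),
    L = {p : Fin d → ℤ | ∃ t : ℤ, ¬ t ≡ r [ZMOD ((k : ℤ) + 1)] ∧
      p = a + t • Pi.single i (1 : ℤ)}

open Finset

/-- In any interval of `k+1` consecutive integers there is exactly one residue hit. -/
lemma count_modeq (k : ℕ) (m r : ℤ) :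
    ((Finset.Icc m (m + k)).filter (fun t => t ≡ r [ZMOD ((k : ℤ) + 1)])).card = 1 := by
  have hn : (0 : ℤ) < (k : ℤ) + 1 := by positivity
  rw [Finset.card_eq_one]
  refine ⟨m + (r - m) % ((k : ℤ) + 1), ?_⟩
  ext t
  simp only [Finset.mem_filter, Finset.mem_Icc, Finset.mem_singleton]
  constructor
  · rintro ⟨⟨h1, h2⟩, h3⟩
    have hc : m + (r - m) % ((k : ℤ) + 1) ≡ r [ZMOD ((k : ℤ) + 1)] := by
      have : (r - m) % ((k : ℤ) + 1) ≡ r - m [ZMOD ((k : ℤ) + 1)] :=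
        Int.emod_emod_of_dvd _ dvd_rfl
      simpa using (Int.ModEq.add_left m this)
    have hd : ((k : ℤ) + 1) ∣ (m + (r - m) % ((k : ℤ) + 1)) - t :=
      Int.ModEq.dvd (hc.trans h3.symm).symm
    have hb1 : 0 ≤ (r - m) % ((k : ℤ) + 1) := Int.emod_nonneg _ (by omega)
    have hb2 : (r - m) % ((k : ℤ) + 1) < (k : ℤ) + 1 := Int.emod_lt_of_pos _ hn
    have := Int.eq_zero_of_abs_lt_dvd hd (by rw [abs_lt]; omega)
    omega
  · rintro rfl
    have hb1 : 0 ≤ (r - m) % ((k : ℤ) + 1) := Int.emod_nonneg _ (by omega)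
    have hb2 : (r - m) % ((k : ℤ) + 1) < (k : ℤ) + 1 := Int.emod_lt_of_pos _ hn
    refine ⟨⟨by omega, by omega⟩, ?_⟩
    have : (r - m) % ((k : ℤ) + 1) ≡ r - m [ZMOD ((k : ℤ) + 1)] :=
      Int.emod_emod_of_dvd _ dvd_rfl
    simpa using (Int.ModEq.add_left m this)

/-- For `k ≥ 2` and `d ≥ 1`, `ℤ^d` cannot be partitioned into pairwise disjoint
`k`-strings. -/
theorem no_string_tiling (k d : ℕ) (hk : 2 ≤ k) (hd : 1 ≤ d) :
    ¬ ∃ 𝒞 : Set (Set (Fin d → ℤ)),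
        (∀ L ∈ 𝒞, IsKString k L) ∧ 𝒞.PairwiseDisjoint id ∧
        ⋃₀ 𝒞 = (Set.univ : Set (Fin d → ℤ)) := by
  classical
  rintro ⟨𝒞, hstr, hdisj, hcover⟩
  -- the box {0,…,k}^d
  set B : Finset (Fin d → ℤ) := Fintype.piFinset fun _ => Finset.Icc (0 : ℤ) k with hB
  have hBcard : B.card = (k + 1) ^ d := by
    rw [hB, Fintype.card_piFinset]
    simp [Int.card_Icc]
  have hmem : ∀ p : Fin d → ℤ, p ∈ B ↔ ∀ j, 0 ≤ p j ∧ p j ≤ k := by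
    intro p
    simp [hB, Fintype.mem_piFinset, Finset.mem_Icc, forall_and]
  -- for each point choose its string
  have hex : ∀ p : Fin d → ℤ, ∃ L ∈ 𝒞, p ∈ L := by
    intro p
    have : p ∈ ⋃₀ 𝒞 := by rw [hcover]; trivial
    simpa using this
  choose f hf𝒞 hfmem using hex
  -- uniqueness of the containing string
  have huniq : ∀ (L : Set (Fin d → ℤ)), L ∈ 𝒞 → ∀ p, p ∈ L → f p = L := by
    intro L hL p hp
    by_contra hne
    have := hdisj (hf𝒞 p) hL hne
    exact (Set.disjoint_left.mp this) (hfmem p) hp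
  -- each nonempty fiber has exactly k points
  have hfiber : ∀ L ∈ B.image f, (B.filter (fun p => f p = L)).card = k := by
    intro L hL
    obtain ⟨p₀, hp₀B, hp₀f⟩ := Finset.mem_image.mp hL
    have hL𝒞 : L ∈ 𝒞 := hp₀f ▸ hf𝒞 p₀
    obtain ⟨a, i, r, hLdef⟩ := hstr L hL𝒞
    have hp₀L : p₀ ∈ L := hp₀f ▸ hfmem p₀
    obtain ⟨t₀, ht₀, hp₀eq⟩ := hLdef ▸ hp₀L
    -- fiber = image of the good t's
    have hval : ∀ (t : ℤ) (j : Fin d),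
        ((a + t • Pi.single i (1 : ℤ) : Fin d → ℤ)) j = a j + (if j = i then t else 0) := by
      intro t j
      by_cases hji : j = i <;> simp [hji, Pi.single_apply]
    have haj : ∀ j, j ≠ i → 0 ≤ a j ∧ a j ≤ k := by
      intro j hji
      have := (hmem p₀).mp hp₀B j
      rw [hp₀eq, hval t₀ j, if_neg hji] at this
      omega
    set T : Finset ℤ :=
      (Finset.Icc (-a i) (-a i + k)).filter
        (fun t => ¬ t ≡ r [ZMOD ((k : ℤ) + 1)]) with hT
    have himg : B.filter (fun p => f p = L) = T.image (fun t => a + t • Pi.single i (1 : ℤ)) := by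
      ext p
      simp only [Finset.mem_filter, Finset.mem_image, hT, Finset.mem_Icc]
      constructor
      · rintro ⟨hpB, hpf⟩
        have hpL : p ∈ L := hpf ▸ hfmem p
        obtain ⟨t, ht, hpeq⟩ := hLdef ▸ hpL
        refine ⟨t, ⟨⟨?_, ?_⟩, ht⟩, hpeq.symm⟩ <;>
        · have := (hmem p).mp hpB i
          rw [hpeq, hval t i, if_pos rfl] at this
          omega
      · rintro ⟨t, ⟨⟨h1, h2⟩, ht⟩, rfl⟩
        have hpB : a + t • Pi.single i (1 : ℤ) ∈ B := by
          rw [hmem]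
          intro j
          rw [hval t j]
          by_cases hji : j = i
          · rw [if_pos hji, hji]; omega
          · rw [if_neg hji]; have := haj j hji; omega
        refine ⟨hpB, huniq L hL𝒞 _ ?_⟩
        rw [hLdef]
        exact ⟨t, ht, rfl⟩
    rw [himg, Finset.card_image_of_injective, hT, Finset.filter_not,
      Finset.card_sdiff_of_subset (Finset.filter_subset _ _), count_modeq k (-a i) r]
    · rw [Int.card_Icc]; omega
    · intro s t hst
      have := congrFun hst i
      simp only [Pi.add_apply, Pi.smul_apply, Pi.single_eq_same, smul_eq_mul, mul_one] at this
      omega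
  -- count
  have : (k + 1) ^ d = k * (B.image f).card := by
    rw [← hBcard, Finset.card_eq_sum_card_image f B,
      Finset.sum_congr rfl hfiber, Finset.sum_const, smul_eq_mul, mul_comm]
  have hdvd : k ∣ (k + 1) ^ d := ⟨_, this⟩
  clear this
  have hmod : (k + 1) ^ d % k = 1 := by
    have h2 : 1 % k = 1 := Nat.mod_eq_of_lt (by omega)
    have h1 : (k + 1) % k = 1 := by rw [Nat.add_mod_left]; exact h2
    rw [Nat.pow_mod, h1, one_pow, h2]
  have h0 : (k + 1) ^ d % k = 0 := Nat.mod_eq_zero_of_dvd hdvd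
  omega
end
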